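/- arXiv:2306.05275 — 4 statements merged into one kernel-verified Lean document; each statement's English description precedes it below -/
import Mathlib

section
/- Let X and Y be standard Borel spaces, let P₂ and Q₂ be probability measures on Y, and let κ and η be Markov kernels from Y to X. Let P and Q be the probability measures on X × Y determined by P(A × B) = ∫_B κ(y)(A) dP₂(y) and Q(A × B) = ∫_B η(y)(A) dQ₂(y). Then d_TV(P, Q) ≤ 1 − (1 − sup_{y∈Y} d_TV(κ(y), η(y))) · (1 − d_TV(P₂, Q₂)). -/
open MeasureTheory ProbabilityTheory

/-- Total variation distance `sup_A |μ(A) − ν(A)|` between two measures. -/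
noncomputable def tvDist {X : Type*} [MeasurableSpace X] (μ ν : Measure X) : ℝ :=
  ⨆ S : {S : Set X // MeasurableSet S}, |(μ S.1).toReal - (ν S.1).toReal|

open scoped ENNReal

/-- Core one-sided inequality via Radon–Nikodym derivatives. -/
lemma tv_core {Y : Type*} [MeasurableSpace Y] (μ ν : Measure Y)
    [IsProbabilityMeasure μ] [IsProbabilityMeasure ν]
    (f g : Y → ℝ≥0∞) (hf : Measurable f) (hg : Measurable g)
    (hf1 : ∀ y, f y ≤ 1) (hg1 : ∀ y, g y ≤ 1)
    (ε δ : ℝ) (hε0 : 0 ≤ ε) (hε1 : ε ≤ 1) (hδ0 : 0 ≤ δ)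
    (hfg : ∀ y, f y ≤ g y + ENNReal.ofReal ε)
    (hμν : ∀ A : Set Y, MeasurableSet A → (μ A).toReal - (ν A).toReal ≤ δ) :
    (∫⁻ y, f y ∂μ).toReal - (∫⁻ y, g y ∂ν).toReal ≤ 1 - (1 - ε) * (1 - δ) := by
  set ρ : Measure Y := μ + ν with hρ
  have hμρ : μ ≪ ρ := Measure.absolutelyContinuous_of_le (Measure.le_add_right le_rfl)
  have hνρ : ν ≪ ρ := Measure.absolutelyContinuous_of_le (Measure.le_add_left le_rfl)
  set p : Y → ℝ≥0∞ := μ.rnDeriv ρ with hp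
  set q : Y → ℝ≥0∞ := ν.rnDeriv ρ with hq
  have hpm : Measurable p := Measure.measurable_rnDeriv μ ρ
  have hqm : Measurable q := Measure.measurable_rnDeriv ν ρ
  have hμint : ∫⁻ y, f y ∂μ = ∫⁻ y, f y * p y ∂ρ := by
    conv_lhs => rw [← Measure.withDensity_rnDeriv_eq μ ρ hμρ]
    rw [lintegral_withDensity_eq_lintegral_mul _ hpm hf]
    simp [mul_comm]
  have hνint : ∫⁻ y, g y ∂ν = ∫⁻ y, g y * q y ∂ρ := by
    conv_lhs => rw [← Measure.withDensity_rnDeriv_eq ν ρ hνρ]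
    rw [lintegral_withDensity_eq_lintegral_mul _ hqm hg]
    simp [mul_comm]
  set ε' : ℝ≥0∞ := ENNReal.ofReal ε with hε'
  -- pointwise inequality
  have key : ∀ y, f y * p y ≤ g y * q y + ε' * min (p y) (q y) + (p y - q y) := by
    intro y
    rcases le_total (p y) (q y) with h | h
    · have h1 : p y - q y = 0 := tsub_eq_zero_of_le h
      have h2 : min (p y) (q y) = p y := min_eq_left h
      rw [h1, h2, add_zero]
      calc f y * p y ≤ (g y + ε') * p y :=
            mul_le_mul_left (hfg y) _
        _ = g y * p y + ε' * p y := by ring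
        _ ≤ g y * q y + ε' * p y := by
            gcongr
    · have h2 : min (p y) (q y) = q y := min_eq_right h
      rw [h2]
      calc f y * p y = f y * (q y + (p y - q y)) := by rw [add_tsub_cancel_of_le h]
        _ = f y * q y + f y * (p y - q y) := by ring
        _ ≤ (g y + ε') * q y + 1 * (p y - q y) := by
            gcongr
            · exact hfg y
            · exact hf1 y
        _ = g y * q y + ε' * q y + (p y - q y) := by ring
  set A : Set Y := {y | q y < p y} with hA
  have hAm : MeasurableSet A := measurableSet_lt hqm hpm
  -- the three integrals
  set M : ℝ≥0∞ := ∫⁻ y, min (p y) (q y) ∂ρ with hM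
  set D : ℝ≥0∞ := ∫⁻ y, (p y - q y) ∂ρ with hD
  have hint : ∫⁻ y, f y ∂μ ≤ ∫⁻ y, g y ∂ν + ε' * M + D := by
    rw [hμint, hνint]
    calc ∫⁻ y, f y * p y ∂ρ ≤ ∫⁻ y, (g y * q y + ε' * min (p y) (q y) + (p y - q y)) ∂ρ :=
          lintegral_mono key
      _ = ∫⁻ y, g y * q y ∂ρ + ε' * M + D := by
          rw [lintegral_add_right (g := fun y => p y - q y) _ (hpm.sub hqm),
            lintegral_add_right _ ((hpm.min hqm).const_mul _),
            lintegral_const_mul _ (hpm.min hqm)]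
  -- M + D = 1
  have hMD : M + D = 1 := by
    have : ∀ y, min (p y) (q y) + (p y - q y) = p y := by
      intro y
      rcases le_total (p y) (q y) with h | h
      · rw [min_eq_left h, tsub_eq_zero_of_le h, add_zero]
      · rw [min_eq_right h, add_tsub_cancel_of_le h]
    rw [hM, hD, ← lintegral_add_right (g := fun y => p y - q y) _ (hpm.sub hqm)]
    simp_rw [this]
    rw [Measure.lintegral_rnDeriv hμρ]
    simp
  have hM1 : M ≤ 1 := le_trans le_self_add hMD.le
  have hD1 : D ≤ 1 := le_trans le_add_self hMD.le
  -- D = μ A - ν A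
  have hDeq : D = μ A - ν A := by
    have h0 : ∀ y, (p y - q y) = A.indicator (fun y => p y - q y) y := by
      intro y
      by_cases hy : y ∈ A
      · rw [Set.indicator_of_mem hy]
      · rw [Set.indicator_of_notMem hy]
        exact tsub_eq_zero_of_le (not_lt.mp hy)
    rw [hD, lintegral_congr h0, lintegral_indicator hAm]
    have hsub : ∫⁻ y in A, (p y - q y) ∂ρ = ∫⁻ y in A, p y ∂ρ - ∫⁻ y in A, q y ∂ρ := by
      refine lintegral_sub hqm ?_ ?_
      · exact ne_of_lt (lt_of_le_of_lt (Measure.setLIntegral_rnDeriv_le A) (measure_lt_top ν A))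
      · exact (ae_restrict_iff' hAm).mpr (Filter.Eventually.of_forall fun y hy => (le_of_lt hy))
    rw [hsub, Measure.setLIntegral_rnDeriv hμρ A, Measure.setLIntegral_rnDeriv hνρ A]
  have hνμA : ν A ≤ μ A := by
    rw [← Measure.setLIntegral_rnDeriv hμρ A, ← Measure.setLIntegral_rnDeriv hνρ A]
    exact lintegral_mono_ae ((ae_restrict_iff' hAm).mpr (Filter.Eventually.of_forall
      fun y hy => (le_of_lt hy)))
  -- now to reals
  have hDtoReal : D.toReal = (μ A).toReal - (ν A).toReal := by
    rw [hDeq, ENNReal.toReal_sub_of_le hνμA (measure_ne_top μ A)]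
  have hDδ : D.toReal ≤ δ := hDtoReal ▸ hμν A hAm
  have hG1 : (∫⁻ y, g y ∂ν) ≤ 1 := by
    calc ∫⁻ y, g y ∂ν ≤ ∫⁻ _, 1 ∂ν := lintegral_mono hg1
      _ = 1 := by simp
  have hF1 : (∫⁻ y, f y ∂μ) ≤ 1 := by
    calc ∫⁻ y, f y ∂μ ≤ ∫⁻ _, 1 ∂μ := lintegral_mono hf1
      _ = 1 := by simp
  have hRHSne : (∫⁻ y, g y ∂ν) + ε' * M + D ≠ ⊤ := by
    refine ENNReal.add_ne_top.mpr ⟨ENNReal.add_ne_top.mpr ⟨?_, ?_⟩, ?_⟩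
    · exact ne_top_of_le_ne_top ENNReal.one_ne_top hG1
    · exact ENNReal.mul_ne_top ENNReal.ofReal_ne_top (ne_top_of_le_ne_top ENNReal.one_ne_top hM1)
    · exact ne_top_of_le_ne_top ENNReal.one_ne_top hD1
  have hmain : (∫⁻ y, f y ∂μ).toReal ≤
      (∫⁻ y, g y ∂ν).toReal + ε * M.toReal + D.toReal := by
    have h := ENNReal.toReal_mono hRHSne hint
    rw [ENNReal.toReal_add (ENNReal.add_ne_top.mp hRHSne).1 (ENNReal.add_ne_top.mp hRHSne).2,
      ENNReal.toReal_add (ENNReal.add_ne_top.mp (ENNReal.add_ne_top.mp hRHSne).1).1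
        (ENNReal.add_ne_top.mp (ENNReal.add_ne_top.mp hRHSne).1).2,
      ENNReal.toReal_mul, hε', ENNReal.toReal_ofReal hε0] at h
    exact h
  have hMDreal : M.toReal + D.toReal = 1 := by
    rw [← ENNReal.toReal_add (ne_top_of_le_ne_top ENNReal.one_ne_top hM1)
      (ne_top_of_le_ne_top ENNReal.one_ne_top hD1), hMD]
    simp
  have hGr : (∫⁻ y, g y ∂ν).toReal ≤ 1 := by
    exact ENNReal.toReal_le_of_le_ofReal one_pos.le (by simpa using hG1)
  have hD0 : 0 ≤ D.toReal := ENNReal.toReal_nonneg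
  nlinarith [hmain, hMDreal, hDδ, hD0]

lemma tvDist_abs_le {X : Type*} [MeasurableSpace X] (μ ν : Measure X)
    [IsProbabilityMeasure μ] [IsProbabilityMeasure ν] {S : Set X} (hS : MeasurableSet S) :
    |(μ S).toReal - (ν S).toReal| ≤ tvDist μ ν := by
  have hbdd : BddAbove (Set.range fun S : {S : Set X // MeasurableSet S} =>
      |(μ S.1).toReal - (ν S.1).toReal|) := by
    refine ⟨1, ?_⟩
    rintro _ ⟨T, rfl⟩
    have h1 : (μ T.1).toReal ≤ 1 := by
      simpa using ENNReal.toReal_mono ENNReal.one_ne_top (prob_le_one (μ := μ) (s := T.1))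
    have h2 : (ν T.1).toReal ≤ 1 := by
      simpa using ENNReal.toReal_mono ENNReal.one_ne_top (prob_le_one (μ := ν) (s := T.1))
    have h3 : 0 ≤ (μ T.1).toReal := ENNReal.toReal_nonneg
    have h4 : 0 ≤ (ν T.1).toReal := ENNReal.toReal_nonneg
    rw [abs_sub_le_iff]; constructor <;> linarith
  exact le_ciSup hbdd (⟨S, hS⟩ : {S : Set X // MeasurableSet S})

lemma tvDist_nonneg {X : Type*} [MeasurableSpace X] (μ ν : Measure X)
    [IsProbabilityMeasure μ] [IsProbabilityMeasure ν] : 0 ≤ tvDist μ ν :=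
  (abs_nonneg _).trans (tvDist_abs_le μ ν MeasurableSet.empty)

lemma tvDist_le_one {X : Type*} [MeasurableSpace X] (μ ν : Measure X)
    [IsProbabilityMeasure μ] [IsProbabilityMeasure ν] : tvDist μ ν ≤ 1 := by
  refine ciSup_le fun T => ?_
  have h1 : (μ T.1).toReal ≤ 1 := by
    simpa using ENNReal.toReal_mono ENNReal.one_ne_top (prob_le_one (μ := μ) (s := T.1))
  have h2 : (ν T.1).toReal ≤ 1 := by
    simpa using ENNReal.toReal_mono ENNReal.one_ne_top (prob_le_one (μ := ν) (s := T.1))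
  have h3 : 0 ≤ (μ T.1).toReal := ENNReal.toReal_nonneg
  have h4 : 0 ≤ (ν T.1).toReal := ENNReal.toReal_nonneg
  rw [abs_sub_le_iff]; constructor <;> linarith

lemma measure_eq_comp {X Y : Type*} [MeasurableSpace X] [MeasurableSpace Y]
    (P₂ : Measure Y) [IsProbabilityMeasure P₂]
    (κ : ProbabilityTheory.Kernel Y X) [ProbabilityTheory.IsMarkovKernel κ]
    (P : Measure (X × Y))
    (hP : ∀ (A : Set X) (B : Set Y), MeasurableSet A → MeasurableSet B →
        P (A ×ˢ B) = ∫⁻ y in B, κ y A ∂P₂)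
    {S : Set (X × Y)} (hS : MeasurableSet S) :
    P S = ∫⁻ y, κ y (Prod.mk y ⁻¹' (Prod.swap ⁻¹' S)) ∂P₂ := by
  have hfin : IsFiniteMeasure P := by
    constructor
    rw [← Set.univ_prod_univ, hP _ _ MeasurableSet.univ MeasurableSet.univ]
    simp
  have hPP : P = (P₂ ⊗ₘ κ).map Prod.swap := by
    refine ext_of_generate_finite _ generateFrom_prod.symm isPiSystem_prod ?_ ?_
    · rintro s ⟨A, hA, B, hB, rfl⟩
      rw [hP A B hA hB, Measure.map_apply measurable_swap (hA.prod hB),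
        Set.preimage_swap_prod, Measure.compProd_apply_prod hB hA]
    · have h1 : P Set.univ = 1 := by
        rw [← Set.univ_prod_univ, hP _ _ MeasurableSet.univ MeasurableSet.univ]; simp
      rw [h1, Measure.map_apply measurable_swap MeasurableSet.univ]
      simp
  rw [hPP, Measure.map_apply measurable_swap hS,
    Measure.compProd_apply (measurable_swap hS)]

/-!
Total variation distance of two multivariate distributions (coupling bound):
if `P(A × B) = ∫_B κ(y)(A) dP₂(y)` and `Q(A × B) = ∫_B η(y)(A) dQ₂(y)` for Markov
kernels `κ, η : Y → X` and probability measures `P₂, Q₂` on `Y`, then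
`d_TV(P, Q) ≤ 1 − (1 − sup_y d_TV(κ(y), η(y)))·(1 − d_TV(P₂, Q₂))`.
-/
theorem tv_product_bound
    {X Y : Type*} [MeasurableSpace X] [StandardBorelSpace X]
    [MeasurableSpace Y] [StandardBorelSpace Y] [Nonempty Y]
    (P₂ Q₂ : Measure Y) [IsProbabilityMeasure P₂] [IsProbabilityMeasure Q₂]
    (κ η : ProbabilityTheory.Kernel Y X)
    [ProbabilityTheory.IsMarkovKernel κ] [ProbabilityTheory.IsMarkovKernel η]
    (P Q : Measure (X × Y))
    (hP : ∀ (A : Set X) (B : Set Y), MeasurableSet A → MeasurableSet B →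
        P (A ×ˢ B) = ∫⁻ y in B, κ y A ∂P₂)
    (hQ : ∀ (A : Set X) (B : Set Y), MeasurableSet A → MeasurableSet B →
        Q (A ×ˢ B) = ∫⁻ y in B, η y A ∂Q₂) :
    tvDist P Q ≤ 1 - (1 - ⨆ y, tvDist (κ y) (η y)) * (1 - tvDist P₂ Q₂) := by
  set ε : ℝ := ⨆ y, tvDist (κ y) (η y) with hεdef
  set δ : ℝ := tvDist P₂ Q₂ with hδdef
  have hbdd : BddAbove (Set.range fun y => tvDist (κ y) (η y)) := by
    refine ⟨1, ?_⟩
    rintro _ ⟨y, rfl⟩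
    exact tvDist_le_one _ _
  have hε1 : ε ≤ 1 := ciSup_le fun y => tvDist_le_one _ _
  have hε0 : 0 ≤ ε :=
    (tvDist_nonneg _ _).trans (le_ciSup hbdd (Classical.arbitrary Y))
  have hδ0 : 0 ≤ δ := tvDist_nonneg _ _
  refine ciSup_le fun T => ?_
  obtain ⟨S, hS⟩ := T
  simp only
  rw [measure_eq_comp P₂ κ P hP hS, measure_eq_comp Q₂ η Q hQ hS]
  set f : Y → ℝ≥0∞ := fun y => κ y (Prod.mk y ⁻¹' (Prod.swap ⁻¹' S)) with hfdef
  set g : Y → ℝ≥0∞ := fun y => η y (Prod.mk y ⁻¹' (Prod.swap ⁻¹' S)) with hgdef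
  have hSsw : MeasurableSet (Prod.swap ⁻¹' S : Set (Y × X)) := measurable_swap hS
  have hf : Measurable f := ProbabilityTheory.Kernel.measurable_kernel_prodMk_left hSsw
  have hg : Measurable g := ProbabilityTheory.Kernel.measurable_kernel_prodMk_left hSsw
  have hf1 : ∀ y, f y ≤ 1 := fun y => prob_le_one
  have hg1 : ∀ y, g y ≤ 1 := fun y => prob_le_one
  have habs : ∀ y, |(f y).toReal - (g y).toReal| ≤ ε := fun y =>
    (tvDist_abs_le (κ y) (η y) (hSsw.preimage measurable_prodMk_left)).trans (le_ciSup hbdd y)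
  have hfg : ∀ y, f y ≤ g y + ENNReal.ofReal ε := by
    intro y
    have h1 : (f y).toReal ≤ (g y).toReal + ε := by
      have := abs_le.mp (habs y); linarith [this.2]
    calc f y = ENNReal.ofReal (f y).toReal :=
          (ENNReal.ofReal_toReal (ne_top_of_le_ne_top ENNReal.one_ne_top (hf1 y))).symm
      _ ≤ ENNReal.ofReal ((g y).toReal + ε) := ENNReal.ofReal_le_ofReal h1
      _ = ENNReal.ofReal (g y).toReal + ENNReal.ofReal ε := ENNReal.ofReal_add ENNReal.toReal_nonneg hε0
      _ = g y + ENNReal.ofReal ε := by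
          rw [ENNReal.ofReal_toReal (ne_top_of_le_ne_top ENNReal.one_ne_top (hg1 y))]
  have hgf : ∀ y, g y ≤ f y + ENNReal.ofReal ε := by
    intro y
    have h1 : (g y).toReal ≤ (f y).toReal + ε := by
      have := abs_le.mp (habs y); linarith [this.1]
    calc g y = ENNReal.ofReal (g y).toReal :=
          (ENNReal.ofReal_toReal (ne_top_of_le_ne_top ENNReal.one_ne_top (hg1 y))).symm
      _ ≤ ENNReal.ofReal ((f y).toReal + ε) := ENNReal.ofReal_le_ofReal h1
      _ = ENNReal.ofReal (f y).toReal + ENNReal.ofReal ε := ENNReal.ofReal_add ENNReal.toReal_nonneg hε0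
      _ = f y + ENNReal.ofReal ε := by
          rw [ENNReal.ofReal_toReal (ne_top_of_le_ne_top ENNReal.one_ne_top (hf1 y))]
  have hPQ : ∀ A : Set Y, MeasurableSet A → (P₂ A).toReal - (Q₂ A).toReal ≤ δ := fun A hA =>
    (le_abs_self _).trans (tvDist_abs_le P₂ Q₂ hA)
  have hQP : ∀ A : Set Y, MeasurableSet A → (Q₂ A).toReal - (P₂ A).toReal ≤ δ := fun A hA =>
    by
      have := tvDist_abs_le P₂ Q₂ hA
      rw [abs_sub_le_iff] at this
      exact this.2
  rw [abs_sub_le_iff]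
  exact ⟨tv_core P₂ Q₂ f g hf hg hf1 hg1 ε δ hε0 hε1 hδ0 hfg hPQ,
    tv_core Q₂ P₂ g f hg hf hg1 hf1 ε δ hε0 hε1 hδ0 hgf hQP⟩
end

section
/- Let b > 0 and let X₁, …, X_d be i.i.d. real random variables with the Laplace(0, b) distribution, i.e., with density x ↦ e^{−|x|/b}/(2b) with respect to Lebesgue measure. Then for every β > 0, P( √(Σ_{s=1}^d X_s²) ≥ b·√d·log(d/β) ) ≤ β. -/
open MeasureTheory

/-- The Laplace distribution `Laplace(0, b)` on `ℝ`, with density `x ↦ e^{−|x|/b}/(2b)`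
with respect to Lebesgue measure. -/
noncomputable def laplaceMeasure (b : ℝ) : Measure ℝ :=
  volume.withDensity fun x => ENNReal.ofReal (Real.exp (-|x| / b) / (2 * b))

open Real Set
open scoped ENNReal

lemma laplace_lintegral_Ici (b : ℝ) (hb : 0 < b) (t : ℝ) (ht : 0 ≤ t) :
    ∫⁻ x in Set.Ici t, ENNReal.ofReal (Real.exp (-|x| / b) / (2 * b))
      = ENNReal.ofReal (Real.exp (-t / b) / 2) := by
  rw [← MeasureTheory.restrict_Ioi_eq_restrict_Ici]
  rw [setLIntegral_congr_fun measurableSet_Ioi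
    ((fun x hx => by
      beta_reduce; rw [abs_of_nonneg (le_of_lt (lt_of_le_of_lt ht hx))]) :
      EqOn (fun x : ℝ => ENNReal.ofReal (Real.exp (-|x| / b) / (2 * b)))
        (fun x : ℝ => ENNReal.ofReal (Real.exp (-x / b) / (2 * b))) (Set.Ioi t))]
  have hint : IntegrableOn (fun x : ℝ => Real.exp (-x / b) / (2 * b)) (Set.Ioi t) := by
    have h : IntegrableOn (fun x : ℝ => Real.exp (-b⁻¹ * x) / (2 * b)) (Set.Ioi t) :=
      (exp_neg_integrableOn_Ioi t (inv_pos.mpr hb)).div_const (2 * b)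
    refine h.congr_fun (fun x _ => ?_) measurableSet_Ioi
    beta_reduce; rw [neg_mul, mul_comm b⁻¹, ← div_eq_mul_inv, neg_div]
  rw [← ofReal_integral_eq_lintegral_ofReal hint
    (ae_of_all _ fun x => by positivity)]
  congr 1
  have h1 : ∫ x in Set.Ioi t, Real.exp (-x / b) = b * Real.exp (-t / b) := by
    have h := integral_comp_mul_right_Ioi (fun x => Real.exp (-x)) t (inv_pos.mpr hb)
    simp only [smul_eq_mul, inv_inv, integral_exp_neg_Ioi] at h
    calc ∫ x in Set.Ioi t, Real.exp (-x / b)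
        = ∫ x in Set.Ioi t, Real.exp (-(x * b⁻¹)) := by
          refine setIntegral_congr_fun measurableSet_Ioi fun x _ => ?_
          rw [div_eq_mul_inv, neg_mul]
      _ = b * Real.exp (-(t * b⁻¹)) := h
      _ = b * Real.exp (-t / b) := by rw [div_eq_mul_inv, neg_mul]
  rw [integral_div, h1]
  field_simp

lemma laplace_lintegral_Iic (b : ℝ) (hb : 0 < b) (t : ℝ) (ht : 0 ≤ t) :
    ∫⁻ x in Set.Iic (-t), ENNReal.ofReal (Real.exp (-|x| / b) / (2 * b))
      = ENNReal.ofReal (Real.exp (-t / b) / 2) := by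
  have hmeas : Measurable fun x : ℝ => ENNReal.ofReal (Real.exp (-|x| / b) / (2 * b)) := by
    refine Measurable.ennreal_ofReal ?_
    exact ((continuous_abs.neg.div_const b).rexp.div_const (2 * b)).measurable
  have hmap : (volume : Measure ℝ) = Measure.map Neg.neg volume :=
    (Measure.map_neg_eq_self (volume : Measure ℝ)).symm
  calc ∫⁻ x in Set.Iic (-t), ENNReal.ofReal (Real.exp (-|x| / b) / (2 * b)) ∂volume
      = ∫⁻ x in Set.Iic (-t), ENNReal.ofReal (Real.exp (-|x| / b) / (2 * b))
          ∂(Measure.map Neg.neg volume) := by rw [← hmap]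
    _ = ∫⁻ x in Neg.neg ⁻¹' Set.Iic (-t),
          ENNReal.ofReal (Real.exp (-|(-x)| / b) / (2 * b)) ∂volume := by
        rw [setLIntegral_map measurableSet_Iic hmeas measurable_neg]
    _ = ∫⁻ x in Set.Ici t, ENNReal.ofReal (Real.exp (-|x| / b) / (2 * b)) ∂volume := by
        congr 1
        · ext x; simp [neg_le]
        · funext x; rw [abs_neg]
    _ = ENNReal.ofReal (Real.exp (-t / b) / 2) := laplace_lintegral_Ici b hb t ht

lemma laplace_tail (b : ℝ) (hb : 0 < b) (t : ℝ) (ht : 0 ≤ t) :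
    laplaceMeasure b {x | t ≤ |x|} = ENNReal.ofReal (Real.exp (-t / b)) := by
  have hset : {x : ℝ | t ≤ |x|} = Set.Iic (-t) ∪ Set.Ici t := by
    ext x
    simp only [Set.mem_setOf_eq, Set.mem_union, Set.mem_Iic, Set.mem_Ici, le_abs, le_neg]
    tauto
  have hnull : laplaceMeasure b {(-t)} = 0 := by
    rw [laplaceMeasure, withDensity_apply _ (measurableSet_singleton _),
      Measure.restrict_eq_zero.mpr (volume_singleton), lintegral_zero_measure]
  have hd : AEDisjoint (laplaceMeasure b) (Set.Iic (-t)) (Set.Ici t) := by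
    refine measure_mono_null ?_ hnull
    rintro x ⟨hx1, hx2⟩
    have h0 : t = 0 := le_antisymm (by linarith [le_trans (show t ≤ x from hx2) (show x ≤ -t from hx1)]) ht
    subst h0
    simp only [Set.mem_Iic, neg_zero] at hx1
    simp only [Set.mem_Ici] at hx2
    simp only [Set.mem_singleton_iff, neg_zero]
    linarith
  rw [hset, measure_union₀ measurableSet_Ici.nullMeasurableSet hd]
  rw [laplaceMeasure, withDensity_apply _ measurableSet_Iic,
    withDensity_apply _ measurableSet_Ici,
    laplace_lintegral_Iic b hb t ht, laplace_lintegral_Ici b hb t ht,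
    ← ENNReal.ofReal_add (by positivity) (by positivity)]
  ring_nf

lemma laplace_isProbability (b : ℝ) (hb : 0 < b) :
    IsProbabilityMeasure (laplaceMeasure b) := by
  constructor
  have : (Set.univ : Set ℝ) = {x | (0 : ℝ) ≤ |x|} := by
    ext x; simp [abs_nonneg]
  rw [this, laplace_tail b hb 0 le_rfl]
  simp

/-!
Tail bound for a vector of i.i.d. Laplace random variables:
if `X₁, …, X_d` are i.i.d. `Laplace(0, b)`, then for every `β > 0`,
`P(√(Σ_s X_s²) ≥ b √d log(d/β)) ≤ β`.
-/
theorem laplace_vector_tail (d : ℕ) (hd : 1 ≤ d) (b : ℝ) (hb : 0 < b)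
    (β : ℝ) (hβ : 0 < β) :
    (Measure.pi fun _ : Fin d => laplaceMeasure b)
        {x | b * Real.sqrt d * Real.log (d / β) ≤ Real.sqrt (∑ s, x s ^ 2)}
      ≤ ENNReal.ofReal β := by
  haveI : IsProbabilityMeasure (laplaceMeasure b) := laplace_isProbability b hb
  have hd0 : (0 : ℝ) < d := by exact_mod_cast Nat.lt_of_lt_of_le Nat.zero_lt_one hd
  by_cases hlog : Real.log (d / β) ≤ 0
  · -- then d ≤ β, and the total mass is 1 ≤ β
    have hdβ : (d : ℝ) ≤ β := by
      by_contra h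
      push_neg at h
      have : 0 < Real.log (d / β) :=
        Real.log_pos (by rw [lt_div_iff₀ hβ, one_mul]; exact h)
      linarith
    have h1β : (1 : ℝ) ≤ β := le_trans (by exact_mod_cast hd) hdβ
    calc (Measure.pi fun _ : Fin d => laplaceMeasure b)
          {x | b * Real.sqrt d * Real.log (d / β) ≤ Real.sqrt (∑ s, x s ^ 2)}
        ≤ (Measure.pi fun _ : Fin d => laplaceMeasure b) Set.univ :=
          measure_mono (Set.subset_univ _)
      _ = 1 := measure_univ
      _ ≤ ENNReal.ofReal β := by
          rw [← ENNReal.ofReal_one]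
          exact ENNReal.ofReal_le_ofReal h1β
  · push_neg at hlog
    set L := Real.log (d / β) with hL
    set c := b * L with hc
    have hcpos : 0 < c := mul_pos hb hlog
    -- union bound
    have hsub : {x : Fin d → ℝ | b * Real.sqrt d * L ≤ Real.sqrt (∑ s, x s ^ 2)}
        ⊆ ⋃ s : Fin d, (fun x : Fin d → ℝ => x s) ⁻¹' {y : ℝ | c ≤ |y|} := by
      intro x hx
      by_contra hcon
      simp only [Set.mem_iUnion, Set.mem_preimage, Set.mem_setOf_eq, not_exists,
        not_le] at hcon
      have hsum : ∑ s, x s ^ 2 < ∑ _s : Fin d, c ^ 2 := by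
        refine Finset.sum_lt_sum_of_nonempty ?_ fun s _ => ?_
        · exact Finset.univ_nonempty_iff.mpr (Fin.pos_iff_nonempty.mp (by omega))
        · calc x s ^ 2 = |x s| ^ 2 := (sq_abs _).symm
            _ < c ^ 2 := by
              have := hcon s
              nlinarith [abs_nonneg (x s)]
      have hsum' : ∑ s, x s ^ 2 < d * c ^ 2 := by
        simpa [Finset.sum_const, nsmul_eq_mul] using hsum
      have hsqrt : Real.sqrt (∑ s, x s ^ 2) < Real.sqrt (d * c ^ 2) :=
        Real.sqrt_lt_sqrt (Finset.sum_nonneg fun s _ => sq_nonneg _) hsum'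
      have heq : Real.sqrt ((d : ℝ) * c ^ 2) = b * Real.sqrt d * L := by
        rw [Real.sqrt_mul (le_of_lt hd0), Real.sqrt_sq hcpos.le, hc]
        ring
      rw [heq] at hsqrt
      exact absurd hx (by simp only [Set.mem_setOf_eq, not_le]; exact hsqrt)
    have hB : MeasurableSet {y : ℝ | c ≤ |y|} := by
      have : {y : ℝ | c ≤ |y|} = Set.Iic (-c) ∪ Set.Ici c := by
        ext y
        simp only [Set.mem_setOf_eq, Set.mem_union, Set.mem_Iic, Set.mem_Ici, le_abs, le_neg]
        tauto
      rw [this]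
      exact measurableSet_Iic.union measurableSet_Ici
    -- measure of one cylinder
    have hcyl : ∀ s : Fin d,
        (Measure.pi fun _ : Fin d => laplaceMeasure b)
          ((fun x : Fin d → ℝ => x s) ⁻¹' {y : ℝ | c ≤ |y|})
        = laplaceMeasure b {y : ℝ | c ≤ |y|} := by
      intro s
      classical
      have hpre : (fun x : Fin d → ℝ => x s) ⁻¹' {y : ℝ | c ≤ |y|}
          = Set.pi Set.univ (fun j => if j = s then {y : ℝ | c ≤ |y|} else Set.univ) := by
        ext x
        simp only [Set.mem_preimage, Set.mem_pi, Set.mem_univ, forall_true_left]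
        constructor
        · intro h j
          by_cases hj : j = s <;> simp [hj, h]
        · intro h
          have := h s
          simpa using this
      rw [hpre, Measure.pi_pi]
      rw [Finset.prod_eq_single s (fun j _ hj => by simp [hj]) (by simp)]
      simp
    have htail : laplaceMeasure b {y : ℝ | c ≤ |y|} = ENNReal.ofReal (β / d) := by
      rw [laplace_tail b hb c hcpos.le]
      congr 1
      have h1 : -(b * L) / b = -L := by rw [neg_div, mul_comm, mul_div_assoc, div_self hb.ne', mul_one]
      rw [h1, hL, ← Real.log_inv, Real.exp_log (inv_pos.mpr (div_pos hd0 hβ)), inv_div]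
    calc (Measure.pi fun _ : Fin d => laplaceMeasure b)
          {x | b * Real.sqrt d * L ≤ Real.sqrt (∑ s, x s ^ 2)}
        ≤ (Measure.pi fun _ : Fin d => laplaceMeasure b)
            (⋃ s : Fin d, (fun x : Fin d → ℝ => x s) ⁻¹' {y : ℝ | c ≤ |y|}) :=
          measure_mono hsub
      _ ≤ ∑ s : Fin d, (Measure.pi fun _ : Fin d => laplaceMeasure b)
            ((fun x : Fin d → ℝ => x s) ⁻¹' {y : ℝ | c ≤ |y|}) :=
          measure_iUnion_fintype_le _ _
      _ = ∑ j : Fin d, ENNReal.ofReal (β / d) := by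
          refine Finset.sum_congr rfl fun s _ => ?_
          rw [hcyl s, htail]
      _ = (d : ℝ≥0∞) * ENNReal.ofReal (β / d) := by
          simp [Finset.sum_const, nsmul_eq_mul]
      _ = ENNReal.ofReal β := by
          rw [← ENNReal.ofReal_natCast d, ← ENNReal.ofReal_mul (by positivity)]
          congr 1
          field_simp
end

section
/- Let k ≥ 1 be an integer and let ε > 0 and δ' ∈ (0, 1/2] satisfy ε < 1/√k and 1/√k < log 2. Then ε·√(2k·log(1/δ')) + k·ε·(e^ε − 1) ≤ √(6k·log(1/δ')). -/
/-!
Advanced composition rule simplification (Corollary B.2 of the paper):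
if `k ≥ 1`, `0 < ε < 1/√k` and `1/√k < log 2`, and `δ' ∈ (0, 1/2]`, then
`ε√(2k log(1/δ')) + kε(e^ε − 1) ≤ √(6k log(1/δ'))`.
-/
theorem advanced_composition_simplification
    (k : ℕ) (hk : 1 ≤ k) (ε δ' : ℝ) (hε : 0 < ε)
    (hδ'0 : 0 < δ') (hδ'1 : δ' ≤ 1 / 2)
    (hεk : ε < 1 / Real.sqrt k) (hklog : 1 / Real.sqrt k < Real.log 2) :
    ε * Real.sqrt (2 * k * Real.log (1 / δ')) + k * ε * (Real.exp ε - 1)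
      ≤ Real.sqrt (6 * k * Real.log (1 / δ')) := by
  have hk0 : (0:ℝ) < k := by exact_mod_cast hk
  have hsk : (0:ℝ) < Real.sqrt k := Real.sqrt_pos.2 hk0
  set L := Real.log (1 / δ') with hLdef
  have hlog2 : Real.log 2 < 0.6931471808 := Real.log_two_lt_d9
  have hlog2' : (0.6931471803:ℝ) < Real.log 2 := Real.log_two_gt_d9
  -- L ≥ log 2
  have hL : Real.log 2 ≤ L := by
    apply Real.log_le_log (by norm_num)
    rw [le_div_iff₀ hδ'0]; linarith
  have hLhalf : (1:ℝ)/2 ≤ L := by linarith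
  have hL0 : 0 < L := by linarith
  -- k ≥ 3
  have hk3 : (3:ℝ) ≤ k := by
    by_contra h
    push_neg at h
    have hk2 : (k:ℝ) ≤ 2 := by
      have : k ≤ 2 := by exact_mod_cast Nat.lt_succ_iff.mp (by exact_mod_cast h)
      exact_mod_cast this
    have : Real.sqrt k ≤ Real.sqrt 2 := Real.sqrt_le_sqrt hk2
    have h2 : Real.sqrt 2 < 1.415 := by
      rw [show (1.415:ℝ) = Real.sqrt (1.415^2) from (Real.sqrt_sq (by norm_num)).symm]
      exact Real.sqrt_lt_sqrt (by norm_num) (by norm_num)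
    have : 1 / Real.sqrt 2 ≤ 1 / Real.sqrt k := by
      apply one_div_le_one_div_of_le hsk this
    have h3 : (1:ℝ) / Real.sqrt 2 > 1/1.415 := by
      apply one_div_lt_one_div_of_lt (Real.sqrt_pos.2 (by norm_num)) h2
    have : (1:ℝ)/1.415 < Real.log 2 := by linarith
    norm_num at this
    linarith
  -- ε bounds
  have hεsk : ε * Real.sqrt k < 1 := by
    rw [div_eq_inv_mul, mul_one] at hεk
    calc ε * Real.sqrt k < (Real.sqrt k)⁻¹ * Real.sqrt k := by
          apply mul_lt_mul_of_pos_right hεk hsk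
      _ = 1 := inv_mul_cancel₀ (ne_of_gt hsk)
  have hεlt : ε < 0.694 := by
    have := hεk.trans hklog
    linarith
  -- exp bound: exp ε ≤ 1 + 2ε
  have hexp : Real.exp ε ≤ 1 + 2*ε := by
    have h := Real.exp_bound' hε.le (by linarith : ε ≤ 1) (n := 3)
    simp [Finset.sum_range_succ] at h
    norm_num [Nat.factorial] at h
    nlinarith
  -- second term: kε(e^ε - 1) ≤ 2kε² ≤ 2
  have hkε2 : (k:ℝ) * ε^2 ≤ 1 := by
    nlinarith [Real.mul_self_sqrt hk0.le, mul_pos hε hsk, hεsk]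
  have hterm2 : (k:ℝ) * ε * (Real.exp ε - 1) ≤ 2 := by
    have h1 : (k:ℝ) * ε * (Real.exp ε - 1) ≤ (k:ℝ) * ε * (2*ε) := by
      apply mul_le_mul_of_nonneg_left (by linarith) (by positivity)
    nlinarith
  -- first term: ε√(2kL) ≤ √(2L)
  have hsqrt2kL : Real.sqrt (2 * k * L) = Real.sqrt k * Real.sqrt (2 * L) := by
    rw [← Real.sqrt_mul hk0.le]
    ring_nf
  have hterm1 : ε * Real.sqrt (2 * k * L) ≤ Real.sqrt (2 * L) := by
    rw [hsqrt2kL, ← mul_assoc]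
    calc ε * Real.sqrt k * Real.sqrt (2*L) ≤ 1 * Real.sqrt (2*L) := by
          apply mul_le_mul_of_nonneg_right hεsk.le (Real.sqrt_nonneg _)
      _ = Real.sqrt (2*L) := one_mul _
  -- √(2L) ≥ 1
  have hsqrt2L : (1:ℝ) ≤ Real.sqrt (2*L) := by
    rw [show (1:ℝ) = Real.sqrt 1 from (Real.sqrt_one).symm]
    exact Real.sqrt_le_sqrt (by linarith)
  -- 3√(2L) ≤ √(6kL)
  have hfinal : 3 * Real.sqrt (2*L) ≤ Real.sqrt (6 * k * L) := by
    have h9 : Real.sqrt (9 * (2*L)) = 3 * Real.sqrt (2*L) := by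
      rw [show (9:ℝ)*(2*L) = 3^2*(2*L) by ring, Real.sqrt_mul (by positivity),
        Real.sqrt_sq (by norm_num)]
    rw [← h9]
    apply Real.sqrt_le_sqrt
    nlinarith
  calc ε * Real.sqrt (2 * k * L) + k * ε * (Real.exp ε - 1)
      ≤ Real.sqrt (2*L) + 2 := by linarith
    _ ≤ 3 * Real.sqrt (2*L) := by linarith
    _ ≤ Real.sqrt (6 * k * L) := hfinal
end

section
/- Let R be a Markov kernel from a measurable space H to a measurable space Q that satisfies (ε,δ)-differential privacy between all pairs of inputs, i.e., R(h)(S) ≤ e^ε·R(h')(S) + δ for all h, h' ∈ H and all measurable S ⊆ Q, where ε ≥ 0 and δ ∈ [0,1]. For probability measures μ and μ' on H, let ν = ∫ R(h) dμ(h) and ν' = ∫ R(h) dμ'(h) be the corresponding output distributions. Then KL(ν, ν') ≤ (1 − e^{−ε}(1 − δ))·KL(μ, μ') and d_TV(ν, ν') ≤ (1 − e^{−ε}(1 − δ))·d_TV(μ, μ'). -/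
open MeasureTheory ProbabilityTheory
open scoped ENNReal

attribute [local instance] Classical.propDecidable

/-- Kullback–Leibler divergence: `∫ log(dμ/dν) dμ` when `μ ≪ ν` (and the log-likelihood
ratio is `μ`-integrable), and `+∞` otherwise. -/
noncomputable def klDiv' {X : Type*} [MeasurableSpace X] (μ ν : Measure X) : ℝ≥0∞ :=
  if μ ≪ ν ∧ Integrable (MeasureTheory.llr μ ν) μ then
    ENNReal.ofReal (∫ x, MeasureTheory.llr μ ν x ∂μ)
  else ⊤

lemma dpAux_c_nonneg {ε δ : ℝ} (hε : 0 ≤ ε) (hδ0 : 0 ≤ δ) (hδ1 : δ ≤ 1) :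
    0 ≤ 1 - Real.exp (-ε) * (1 - δ) := by
  have h1 : Real.exp (-ε) ≤ 1 := Real.exp_le_one_iff.mpr (by linarith)
  have h2 : 0 < Real.exp (-ε) := Real.exp_pos _
  nlinarith

lemma dpAux_osc {H Q : Type*} [MeasurableSpace H] [MeasurableSpace Q]
    (R : ProbabilityTheory.Kernel H Q) [ProbabilityTheory.IsMarkovKernel R]
    (ε δ : ℝ) (hε : 0 ≤ ε) (hδ0 : 0 ≤ δ) (hδ1 : δ ≤ 1)
    (hDP : ∀ h h' : H, ∀ S : Set Q, MeasurableSet S →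
      R h S ≤ ENNReal.ofReal (Real.exp ε) * R h' S + ENNReal.ofReal δ)
    (h h' : H) (S : Set Q) (hS : MeasurableSet S) :
    R h S ≤ R h' S + ENNReal.ofReal (1 - Real.exp (-ε) * (1 - δ)) := by
  set c := 1 - Real.exp (-ε) * (1 - δ) with hc
  have hc0 : 0 ≤ c := dpAux_c_nonneg hε hδ0 hδ1
  have key := hDP h' h Sᶜ hS.compl
  -- convert to reals
  have hxt : R h S ≠ ⊤ := (measure_lt_top _ _).ne
  have hyt : R h' S ≠ ⊤ := (measure_lt_top _ _).ne
  set x := (R h S).toReal with hx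
  set y := (R h' S).toReal with hy
  have hcompl₁ : ((R h) Sᶜ).toReal = 1 - x := by
    rw [prob_compl_eq_one_sub hS, hx, ENNReal.toReal_sub_of_le prob_le_one ENNReal.one_ne_top]
    simp
  have hcompl₂ : ((R h') Sᶜ).toReal = 1 - y := by
    rw [prob_compl_eq_one_sub hS, hy, ENNReal.toReal_sub_of_le prob_le_one ENNReal.one_ne_top]
    simp
  have hx0 : 0 ≤ x := ENNReal.toReal_nonneg
  have hy0 : 0 ≤ y := ENNReal.toReal_nonneg
  have hkeyR : 1 - y ≤ Real.exp ε * (1 - x) + δ := by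
    have := ENNReal.toReal_mono (by
        refine ENNReal.add_ne_top.2 ⟨ENNReal.mul_ne_top ENNReal.ofReal_ne_top
          (measure_lt_top _ _).ne, ENNReal.ofReal_ne_top⟩) key
    rw [ENNReal.toReal_add (ENNReal.mul_ne_top ENNReal.ofReal_ne_top (measure_lt_top _ _).ne)
      ENNReal.ofReal_ne_top, ENNReal.toReal_mul, ENNReal.toReal_ofReal (Real.exp_pos _).le,
      ENNReal.toReal_ofReal hδ0, hcompl₁, hcompl₂] at this
    exact this
  have hexp : Real.exp (-ε) * Real.exp ε = 1 := by
    rw [← Real.exp_add]; simp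
  have hexple : Real.exp (-ε) ≤ 1 := Real.exp_le_one_iff.mpr (by linarith)
  have hexppos : 0 < Real.exp (-ε) := Real.exp_pos _
  have hreal : x ≤ y + c := by nlinarith
  have : R h S ≤ ENNReal.ofReal (y + c) := by
    rw [← ENNReal.ofReal_toReal hxt]
    exact ENNReal.ofReal_le_ofReal hreal
  refine this.trans ?_
  rw [ENNReal.ofReal_add hy0 hc0, ENNReal.ofReal_toReal hyt]

lemma dpAux_core {H Q : Type*} [MeasurableSpace H] [MeasurableSpace Q]
    (R : ProbabilityTheory.Kernel H Q) [ProbabilityTheory.IsMarkovKernel R]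
    [Nonempty H] (c : ℝ) (hc : 0 ≤ c)
    (hosc : ∀ h h' : H, ∀ S : Set Q, MeasurableSet S →
      R h S ≤ R h' S + ENNReal.ofReal c)
    (α β : Measure H) [IsFiniteMeasure α] [IsFiniteMeasure β]
    (hm : α Set.univ ≤ β Set.univ) :
    ∃ s : Set H, MeasurableSet s ∧ β s ≤ α s ∧
      ∀ S : Set Q, MeasurableSet S →
        (∫⁻ h, R h S ∂α) ≤ (∫⁻ h, R h S ∂β) + ENNReal.ofReal c * (α s - β s) := by
  obtain ⟨s, hs, h₁, h₂⟩ := hahn_decomposition (μ := α) (ν := β)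
  have hβα : β.restrict s ≤ α.restrict s := by
    rw [Measure.le_iff]
    intro t ht
    rw [Measure.restrict_apply ht, Measure.restrict_apply ht]
    exact h₁ _ (ht.inter hs) Set.inter_subset_right
  have hαβ : α.restrict sᶜ ≤ β.restrict sᶜ := by
    rw [Measure.le_iff]
    intro t ht
    rw [Measure.restrict_apply ht, Measure.restrict_apply ht]
    exact h₂ _ (ht.inter hs.compl) Set.inter_subset_right
  set ρ : Measure H := α.restrict s - β.restrict s with hρdef
  set ρ' : Measure H := β.restrict sᶜ - α.restrict sᶜ with hρ'def
  have hρ : ρ + β.restrict s = α.restrict s := Measure.sub_add_cancel_of_le hβα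
  have hρ' : ρ' + α.restrict sᶜ = β.restrict sᶜ := Measure.sub_add_cancel_of_le hαβ
  have hmassρ : ρ Set.univ + β s = α s := by
    have := congrArg (fun m : Measure H => m Set.univ) hρ
    simpa [Measure.restrict_apply_univ] using this
  have hmassρ' : ρ' Set.univ + α sᶜ = β sᶜ := by
    have := congrArg (fun m : Measure H => m Set.univ) hρ'
    simpa [Measure.restrict_apply_univ] using this
  have hρu : ρ Set.univ = α s - β s := by
    refine ENNReal.eq_sub_of_add_eq (measure_lt_top _ _).ne hmassρ
  have hρρ' : ρ Set.univ ≤ ρ' Set.univ := by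
    have hαuniv : α s + α sᶜ = α Set.univ := measure_add_measure_compl hs
    have hβuniv : β s + β sᶜ = β Set.univ := measure_add_measure_compl hs
    have hchain : ρ Set.univ + (β s + α sᶜ) ≤ ρ' Set.univ + (β s + α sᶜ) := by
      calc ρ Set.univ + (β s + α sᶜ) = (ρ Set.univ + β s) + α sᶜ := by ring
        _ = α s + α sᶜ := by rw [hmassρ]
        _ = α Set.univ := hαuniv
        _ ≤ β Set.univ := hm
        _ = β s + β sᶜ := hβuniv.symm
        _ = β s + (ρ' Set.univ + α sᶜ) := by rw [hmassρ']
        _ = ρ' Set.univ + (β s + α sᶜ) := by ring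
    exact ENNReal.le_of_add_le_add_right
      (ENNReal.add_ne_top.2 ⟨(measure_lt_top _ _).ne, (measure_lt_top _ _).ne⟩) hchain
  refine ⟨s, hs, h₁ s hs subset_rfl, fun S hS => ?_⟩
  set A : ℝ≥0∞ := ⨅ h : H, R h S with hA
  have hub : ∀ h : H, R h S ≤ A + ENNReal.ofReal c := by
    intro h
    have h1 : R h S - ENNReal.ofReal c ≤ A :=
      le_iInf fun h' => tsub_le_iff_right.mpr (hosc h h' S hS)
    calc R h S ≤ (R h S - ENNReal.ofReal c) + ENNReal.ofReal c := le_tsub_add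
      _ ≤ A + ENNReal.ofReal c := add_le_add_left h1 _
  have hlb : ∀ h : H, A ≤ R h S := fun h => iInf_le _ h
  have hA1 : A ≤ 1 := le_trans (hlb (Classical.arbitrary H)) prob_le_one
  have hmeas : Measurable fun h : H => R h S := R.measurable_coe hS
  -- key identity
  have hIα : (∫⁻ h, R h S ∂α) = (∫⁻ h, R h S ∂ρ) + ((∫⁻ h, R h S ∂β.restrict s)
      + (∫⁻ h, R h S ∂α.restrict sᶜ)) := by
    conv_lhs => rw [← Measure.restrict_add_restrict_compl (μ := α) hs]
    rw [lintegral_add_measure, ← hρ, lintegral_add_measure]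
    ring
  have hIβ : (∫⁻ h, R h S ∂β) = (∫⁻ h, R h S ∂ρ') + ((∫⁻ h, R h S ∂β.restrict s)
      + (∫⁻ h, R h S ∂α.restrict sᶜ)) := by
    conv_lhs => rw [← Measure.restrict_add_restrict_compl (μ := β) hs]
    rw [lintegral_add_measure, ← hρ', lintegral_add_measure]
    ring
  have hIρ : (∫⁻ h, R h S ∂ρ) ≤ (A + ENNReal.ofReal c) * ρ Set.univ := by
    calc (∫⁻ h, R h S ∂ρ) ≤ ∫⁻ _, (A + ENNReal.ofReal c) ∂ρ := lintegral_mono hub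
      _ = (A + ENNReal.ofReal c) * ρ Set.univ := lintegral_const _
  have hIρ' : A * ρ Set.univ ≤ (∫⁻ h, R h S ∂ρ') := by
    calc A * ρ Set.univ ≤ A * ρ' Set.univ := mul_le_mul_right hρρ' _
      _ = ∫⁻ _, A ∂ρ' := (lintegral_const _).symm
      _ ≤ ∫⁻ h, R h S ∂ρ' := lintegral_mono hlb
  have hfin : A * ρ Set.univ ≠ ⊤ :=
    ENNReal.mul_ne_top (hA1.trans_lt (by norm_num)).ne (measure_lt_top _ _).ne
  have hchain : (∫⁻ h, R h S ∂α) + A * ρ Set.univ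
      ≤ ((∫⁻ h, R h S ∂β) + ENNReal.ofReal c * ρ Set.univ) + A * ρ Set.univ := by
    calc (∫⁻ h, R h S ∂α) + A * ρ Set.univ
        ≤ (∫⁻ h, R h S ∂α) + (∫⁻ h, R h S ∂ρ') := add_le_add_right hIρ' _
      _ = (∫⁻ h, R h S ∂ρ') + (∫⁻ h, R h S ∂ρ) + ((∫⁻ h, R h S ∂β.restrict s)
          + (∫⁻ h, R h S ∂α.restrict sᶜ)) := by rw [hIα]; ring
      _ = (∫⁻ h, R h S ∂β) + (∫⁻ h, R h S ∂ρ) := by rw [hIβ]; ring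
      _ ≤ (∫⁻ h, R h S ∂β) + (A + ENNReal.ofReal c) * ρ Set.univ := add_le_add_right hIρ _
      _ = ((∫⁻ h, R h S ∂β) + ENNReal.ofReal c * ρ Set.univ) + A * ρ Set.univ := by ring
  have := ENNReal.le_of_add_le_add_right hfin hchain
  rwa [hρu] at this

lemma dpAux_tv_bdd {X : Type*} [MeasurableSpace X] (μ ν : Measure X)
    [IsProbabilityMeasure μ] [IsProbabilityMeasure ν] :
    BddAbove (Set.range fun S : {S : Set X // MeasurableSet S} =>
      |(μ S.1).toReal - (ν S.1).toReal|) := by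
  refine ⟨1, ?_⟩
  rintro x ⟨S, rfl⟩
  have h1 : (μ S.1).toReal ≤ 1 := by
    have := ENNReal.toReal_mono ENNReal.one_ne_top (prob_le_one (μ := μ) (s := S.1))
    simpa using this
  have h2 : (ν S.1).toReal ≤ 1 := by
    have := ENNReal.toReal_mono ENNReal.one_ne_top (prob_le_one (μ := ν) (s := S.1))
    simpa using this
  have h3 : 0 ≤ (μ S.1).toReal := ENNReal.toReal_nonneg
  have h4 : 0 ≤ (ν S.1).toReal := ENNReal.toReal_nonneg
  rw [abs_sub_le_iff]
  constructor <;> linarith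

lemma dpAux_tv_onesided {H Q : Type*} [MeasurableSpace H] [MeasurableSpace Q]
    (R : ProbabilityTheory.Kernel H Q) [ProbabilityTheory.IsMarkovKernel R]
    [Nonempty H] (c : ℝ) (hc : 0 ≤ c)
    (hosc : ∀ h h' : H, ∀ S : Set Q, MeasurableSet S →
      R h S ≤ R h' S + ENNReal.ofReal c)
    (μ μ' : Measure H) [IsProbabilityMeasure μ] [IsProbabilityMeasure μ']
    (S : Set Q) (hS : MeasurableSet S) :
    ((μ.bind fun h => R h) S).toReal - ((μ'.bind fun h => R h) S).toReal
      ≤ c * tvDist μ μ' := by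
  obtain ⟨s, hs, hβs, hmain⟩ := dpAux_core R c hc hosc μ μ' (le_of_eq (by simp))
  have hkey := hmain S hS
  rw [Measure.bind_apply hS R.measurable.aemeasurable,
    Measure.bind_apply hS R.measurable.aemeasurable]
  set M : ℝ≥0∞ := μ s - μ' s with hM
  have hMne : M ≠ ⊤ := ENNReal.sub_ne_top (measure_ne_top μ s)
  have hIν' : (∫⁻ h, R h S ∂μ') ≠ ⊤ := by
    refine (lt_of_le_of_lt (lintegral_mono fun h => prob_le_one) ?_).ne
    simp [lintegral_const]
  have hRHSne : (∫⁻ h, R h S ∂μ') + ENNReal.ofReal c * M ≠ ⊤ :=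
    ENNReal.add_ne_top.2 ⟨hIν', ENNReal.mul_ne_top ENNReal.ofReal_ne_top hMne⟩
  have := ENNReal.toReal_mono hRHSne hkey
  rw [ENNReal.toReal_add hIν' (ENNReal.mul_ne_top ENNReal.ofReal_ne_top hMne),
    ENNReal.toReal_mul, ENNReal.toReal_ofReal hc] at this
  have hMval : M.toReal = (μ s).toReal - (μ' s).toReal :=
    ENNReal.toReal_sub_of_le hβs (measure_lt_top _ _).ne
  have hMle : M.toReal ≤ tvDist μ μ' := by
    rw [hMval]
    refine le_trans (le_abs_self _) ?_
    exact le_ciSup (dpAux_tv_bdd μ μ') ⟨s, hs⟩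
  have hmul : c * M.toReal ≤ c * tvDist μ μ' := mul_le_mul_of_nonneg_left hMle hc
  linarith

lemma dpAux_tv {H Q : Type*} [MeasurableSpace H] [MeasurableSpace Q]
    (R : ProbabilityTheory.Kernel H Q) [ProbabilityTheory.IsMarkovKernel R]
    [Nonempty H] (c : ℝ) (hc : 0 ≤ c)
    (hosc : ∀ h h' : H, ∀ S : Set Q, MeasurableSet S →
      R h S ≤ R h' S + ENNReal.ofReal c)
    (μ μ' : Measure H) [IsProbabilityMeasure μ] [IsProbabilityMeasure μ'] :
    tvDist (μ.bind fun h => R h) (μ'.bind fun h => R h) ≤ c * tvDist μ μ' := by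
  refine ciSup_le fun S => ?_
  rw [abs_sub_le_iff]
  constructor
  · exact dpAux_tv_onesided R c hc hosc μ μ' S.1 S.2
  · have := dpAux_tv_onesided R c hc hosc μ' μ S.1 S.2
    have htv : tvDist μ' μ = tvDist μ μ' := by
      unfold tvDist
      congr 1
      funext T
      rw [abs_sub_comm]
    rwa [htv] at this

noncomputable def dpPsi (γ : ℝ) (a : ℝ≥0∞) : ℝ≥0∞ :=
  if 1 ≤ γ then a - ENNReal.ofReal γ else ENNReal.ofReal γ - a

lemma dpAux_bind_prob {H Q : Type*} [MeasurableSpace H] [MeasurableSpace Q]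
    (R : ProbabilityTheory.Kernel H Q) [ProbabilityTheory.IsMarkovKernel R]
    (μ : Measure H) [IsProbabilityMeasure μ] :
    IsProbabilityMeasure (μ.bind fun h => R h) := by
  constructor
  rw [Measure.bind_apply MeasurableSet.univ R.measurable.aemeasurable]
  simp

lemma dpAux_bind_ac {H Q : Type*} [MeasurableSpace H] [MeasurableSpace Q]
    (R : ProbabilityTheory.Kernel H Q)
    (μ μ' : Measure H) (hac : μ ≪ μ') :
    (μ.bind fun h => R h) ≪ (μ'.bind fun h => R h) := by
  refine Measure.AbsolutelyContinuous.mk fun S hS hS0 => ?_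
  rw [Measure.bind_apply hS R.measurable.aemeasurable] at hS0 ⊢
  have h0 : ∀ᵐ h ∂μ', R h S = 0 := (lintegral_eq_zero_iff (R.measurable_coe hS)).mp hS0
  have h0' : ∀ᵐ h ∂μ, R h S = 0 := hac.ae_le h0
  rw [lintegral_congr_ae h0']
  simp

lemma dpAux_le_psi_ge {X : Type*} [MeasurableSpace X] (P Q : Measure X)
    [IsFiniteMeasure P] [IsFiniteMeasure Q] (hac : P ≪ Q) (γ : ℝ)
    (s : Set X) (hs : MeasurableSet s) :
    P s ≤ (∫⁻ x, (P.rnDeriv Q x - ENNReal.ofReal γ) ∂Q) + ENNReal.ofReal γ * Q s := by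
  have hP : P s = ∫⁻ x in s, P.rnDeriv Q x ∂Q := by
    conv_lhs => rw [← Measure.withDensity_rnDeriv_eq P Q hac]
    rw [withDensity_apply _ hs]
  rw [hP]
  calc (∫⁻ x in s, P.rnDeriv Q x ∂Q)
      ≤ ∫⁻ x in s, ((P.rnDeriv Q x - ENNReal.ofReal γ) + ENNReal.ofReal γ) ∂Q :=
        lintegral_mono fun x => le_tsub_add
    _ = (∫⁻ x in s, (P.rnDeriv Q x - ENNReal.ofReal γ) ∂Q) + ENNReal.ofReal γ * Q s := by
        rw [lintegral_add_right _ measurable_const]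
        simp [Measure.restrict_apply_univ]
    _ ≤ (∫⁻ x, (P.rnDeriv Q x - ENNReal.ofReal γ) ∂Q) + ENNReal.ofReal γ * Q s := by
        gcongr
        exact Measure.restrict_le_self

lemma dpAux_le_psi_lt {X : Type*} [MeasurableSpace X] (P Q : Measure X)
    [IsFiniteMeasure P] [IsFiniteMeasure Q] (hac : P ≪ Q) (γ : ℝ)
    (s : Set X) (hs : MeasurableSet s) :
    ENNReal.ofReal γ * Q s ≤ (∫⁻ x, (ENNReal.ofReal γ - P.rnDeriv Q x) ∂Q) + P s := by
  have hP : P s = ∫⁻ x in s, P.rnDeriv Q x ∂Q := by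
    conv_lhs => rw [← Measure.withDensity_rnDeriv_eq P Q hac]
    rw [withDensity_apply _ hs]
  rw [hP]
  calc ENNReal.ofReal γ * Q s = ∫⁻ _ in s, ENNReal.ofReal γ ∂Q := by
        simp [Measure.restrict_apply_univ]
    _ ≤ ∫⁻ x in s, ((ENNReal.ofReal γ - P.rnDeriv Q x) + P.rnDeriv Q x) ∂Q :=
        lintegral_mono fun x => le_tsub_add
    _ = (∫⁻ x in s, (ENNReal.ofReal γ - P.rnDeriv Q x) ∂Q)
        + ∫⁻ x in s, P.rnDeriv Q x ∂Q := by
        rw [lintegral_add_left (f := fun x => ENNReal.ofReal γ - P.rnDeriv Q x) ((measurable_const.sub (Measure.measurable_rnDeriv P Q)))]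
    _ ≤ _ := by
        gcongr
        exact Measure.restrict_le_self

lemma dpAux_eq_ge {X : Type*} [MeasurableSpace X] (P Q : Measure X)
    [IsFiniteMeasure P] [IsFiniteMeasure Q] (hac : P ≪ Q) (γ : ℝ) :
    (∫⁻ x, (P.rnDeriv Q x - ENNReal.ofReal γ) ∂Q)
      + ENNReal.ofReal γ * Q {x | ENNReal.ofReal γ < P.rnDeriv Q x}
      = P {x | ENNReal.ofReal γ < P.rnDeriv Q x} := by
  set w := P.rnDeriv Q with hw
  have hwm : Measurable w := Measure.measurable_rnDeriv P Q
  set s : Set X := {x | ENNReal.ofReal γ < w x} with hsdef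
  have hs : MeasurableSet s := measurableSet_lt measurable_const hwm
  have hsplit : (∫⁻ x, (w x - ENNReal.ofReal γ) ∂Q) = ∫⁻ x in s, (w x - ENNReal.ofReal γ) ∂Q := by
    rw [← lintegral_add_compl (fun x => w x - ENNReal.ofReal γ) hs]
    have : ∫⁻ x in sᶜ, (w x - ENNReal.ofReal γ) ∂Q = 0 := by
      rw [setLIntegral_congr_fun hs.compl
        (fun x hx => tsub_eq_zero_of_le (not_lt.mp hx))]
      simp
    rw [this, add_zero]
  rw [hsplit]
  have : (∫⁻ x in s, (w x - ENNReal.ofReal γ) ∂Q) + ENNReal.ofReal γ * Q s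
      = ∫⁻ x in s, w x ∂Q := by
    rw [← (by simp [Measure.restrict_apply_univ] : (∫⁻ _ in s, ENNReal.ofReal γ ∂Q)
        = ENNReal.ofReal γ * Q s),
      ← lintegral_add_right _ measurable_const]
    refine setLIntegral_congr_fun hs (fun x hx => ?_)
    exact tsub_add_cancel_of_le (le_of_lt hx)
  rw [this]
  conv_rhs => rw [← Measure.withDensity_rnDeriv_eq P Q hac]
  rw [withDensity_apply _ hs]

lemma dpAux_eq_lt {X : Type*} [MeasurableSpace X] (P Q : Measure X)
    [IsFiniteMeasure P] [IsFiniteMeasure Q] (hac : P ≪ Q) (γ : ℝ) :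
    (∫⁻ x, (ENNReal.ofReal γ - P.rnDeriv Q x) ∂Q)
      + P {x | P.rnDeriv Q x < ENNReal.ofReal γ}
      = ENNReal.ofReal γ * Q {x | P.rnDeriv Q x < ENNReal.ofReal γ} := by
  set w := P.rnDeriv Q with hw
  have hwm : Measurable w := Measure.measurable_rnDeriv P Q
  set s : Set X := {x | w x < ENNReal.ofReal γ} with hsdef
  have hs : MeasurableSet s := measurableSet_lt hwm measurable_const
  have hPs : P s = ∫⁻ x in s, w x ∂Q := by
    conv_lhs => rw [← Measure.withDensity_rnDeriv_eq P Q hac]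
    rw [withDensity_apply _ hs]
  have hsplit : (∫⁻ x, (ENNReal.ofReal γ - w x) ∂Q)
      = ∫⁻ x in s, (ENNReal.ofReal γ - w x) ∂Q := by
    rw [← lintegral_add_compl (fun x => ENNReal.ofReal γ - w x) hs]
    have : ∫⁻ x in sᶜ, (ENNReal.ofReal γ - w x) ∂Q = 0 := by
      rw [setLIntegral_congr_fun hs.compl
        (fun x hx => tsub_eq_zero_of_le (not_lt.mp hx))]
      simp
    rw [this, add_zero]
  rw [hsplit, hPs, ← lintegral_add_right _ hwm]
  have : ∫⁻ x in s, ((ENNReal.ofReal γ - w x) + w x) ∂Q = ∫⁻ _ in s, ENNReal.ofReal γ ∂Q := by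
    refine setLIntegral_congr_fun hs (fun x hx => ?_)
    exact tsub_add_cancel_of_le (le_of_lt hx)
  rw [this]
  simp [Measure.restrict_apply_univ]

lemma dpAux_contraction {H Q : Type*} [MeasurableSpace H] [MeasurableSpace Q]
    (R : ProbabilityTheory.Kernel H Q) [ProbabilityTheory.IsMarkovKernel R]
    [Nonempty H] (c : ℝ) (hc : 0 ≤ c)
    (hosc : ∀ h h' : H, ∀ S : Set Q, MeasurableSet S →
      R h S ≤ R h' S + ENNReal.ofReal c)
    (μ μ' : Measure H) [IsProbabilityMeasure μ] [IsProbabilityMeasure μ']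
    (hac : μ ≪ μ') (γ : ℝ) (hγ : 0 < γ) :
    (∫⁻ x, dpPsi γ ((μ.bind fun h => R h).rnDeriv (μ'.bind fun h => R h) x)
        ∂(μ'.bind fun h => R h))
      ≤ ENNReal.ofReal c * ∫⁻ x, dpPsi γ (μ.rnDeriv μ' x) ∂μ' := by
  set ν := μ.bind fun h => R h with hν
  set ν' := μ'.bind fun h => R h with hν'
  haveI : IsProbabilityMeasure ν := dpAux_bind_prob R μ
  haveI : IsProbabilityMeasure ν' := dpAux_bind_prob R μ'
  have hacν : ν ≪ ν' := dpAux_bind_ac R μ μ' hac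
  set w := ν.rnDeriv ν' with hw
  set g := μ.rnDeriv μ' with hg
  have hwm : Measurable w := Measure.measurable_rnDeriv _ _
  haveI : IsFiniteMeasure ((ENNReal.ofReal γ) • μ') := by
    constructor
    simp [Measure.smul_apply, ENNReal.mul_lt_top, ENNReal.ofReal_lt_top]
  by_cases h1γ : 1 ≤ γ
  · -- γ ≥ 1 case
    simp only [dpPsi, if_pos h1γ]
    have hm : μ Set.univ ≤ ((ENNReal.ofReal γ) • μ') Set.univ := by
      simpa [Measure.smul_apply, measure_univ] using ENNReal.one_le_ofReal.mpr h1γ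
    obtain ⟨s, hs, hβs, hmain⟩ := dpAux_core R c hc hosc μ ((ENNReal.ofReal γ) • μ') hm
    set X : ℝ≥0∞ := μ s - ((ENNReal.ofReal γ) • μ') s with hX
    have hXle : X ≤ ∫⁻ x, (g x - ENNReal.ofReal γ) ∂μ' := by
      rw [hX]
      refine tsub_le_iff_right.mpr ?_
      have := dpAux_le_psi_ge μ μ' hac γ s hs
      simpa [Measure.smul_apply, smul_eq_mul] using this
    set S : Set Q := {x | ENNReal.ofReal γ < w x} with hSdef
    have hS : MeasurableSet S := measurableSet_lt measurable_const hwm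
    have hkey : ν S ≤ ENNReal.ofReal γ * ν' S + ENNReal.ofReal c * X := by
      have := hmain S hS
      rw [← Measure.bind_apply hS R.measurable.aemeasurable] at this
      rw [lintegral_smul_measure, ← Measure.bind_apply hS R.measurable.aemeasurable] at this
      exact this
    have heq := dpAux_eq_ge ν ν' hacν γ
    -- heq : ∫⁻ (w - γ) ∂ν' + γ * ν' S = ν S
    have hchain : (∫⁻ x, (w x - ENNReal.ofReal γ) ∂ν') + ENNReal.ofReal γ * ν' S
        ≤ (ENNReal.ofReal c * ∫⁻ x, (g x - ENNReal.ofReal γ) ∂μ') + ENNReal.ofReal γ * ν' S := by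
      rw [heq]
      calc ν S ≤ ENNReal.ofReal γ * ν' S + ENNReal.ofReal c * X := hkey
        _ ≤ ENNReal.ofReal γ * ν' S
            + ENNReal.ofReal c * ∫⁻ x, (g x - ENNReal.ofReal γ) ∂μ' := by gcongr
        _ = _ := by ring
    exact ENNReal.le_of_add_le_add_right
      (ENNReal.mul_ne_top ENNReal.ofReal_ne_top (measure_ne_top _ _)) hchain
  · -- γ < 1 case
    simp only [dpPsi, if_neg h1γ]
    have hm : ((ENNReal.ofReal γ) • μ') Set.univ ≤ μ Set.univ := by
      simpa [Measure.smul_apply, measure_univ] using ENNReal.ofReal_le_one.mpr (le_of_not_ge h1γ)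
    obtain ⟨s, hs, hβs, hmain⟩ := dpAux_core R c hc hosc ((ENNReal.ofReal γ) • μ') μ hm
    set X : ℝ≥0∞ := ((ENNReal.ofReal γ) • μ') s - μ s with hX
    have hXle : X ≤ ∫⁻ x, (ENNReal.ofReal γ - g x) ∂μ' := by
      rw [hX]
      refine tsub_le_iff_right.mpr ?_
      have := dpAux_le_psi_lt μ μ' hac γ s hs
      simpa [Measure.smul_apply, smul_eq_mul] using this
    set S : Set Q := {x | w x < ENNReal.ofReal γ} with hSdef
    have hS : MeasurableSet S := measurableSet_lt hwm measurable_const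
    have hkey : ENNReal.ofReal γ * ν' S ≤ ν S + ENNReal.ofReal c * X := by
      have := hmain S hS
      rw [lintegral_smul_measure, ← Measure.bind_apply hS R.measurable.aemeasurable,
        ← Measure.bind_apply hS R.measurable.aemeasurable] at this
      exact this
    have heq := dpAux_eq_lt ν ν' hacν γ
    have hchain : (∫⁻ x, (ENNReal.ofReal γ - w x) ∂ν') + ν S
        ≤ (ENNReal.ofReal c * ∫⁻ x, (ENNReal.ofReal γ - g x) ∂μ') + ν S := by
      rw [heq]
      calc ENNReal.ofReal γ * ν' S ≤ ν S + ENNReal.ofReal c * X := hkey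
        _ ≤ ν S + ENNReal.ofReal c * ∫⁻ x, (ENNReal.ofReal γ - g x) ∂μ' := by gcongr
        _ = _ := by ring
    exact ENNReal.le_of_add_le_add_right (measure_ne_top _ _) hchain

lemma dpAux_ftc_ge {t : ℝ} (ht : 1 ≤ t) :
    ∫ γ in Set.Ioc 1 t, γ⁻¹ * (t - γ) = t * Real.log t - t + 1 := by
  rw [← intervalIntegral.integral_of_le ht]
  have hint : IntervalIntegrable (fun γ : ℝ => γ⁻¹ * (t - γ)) MeasureTheory.volume 1 t := by
    rw [intervalIntegrable_iff]
    refine IntegrableOn.mono_set ?_ (Set.uIoc_of_le ht ▸ Set.Ioc_subset_Icc_self)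
    refine ContinuousOn.integrableOn_Icc ?_
    refine ContinuousOn.mul (ContinuousOn.inv₀ continuousOn_id fun x hx => ?_)
      (Continuous.continuousOn (by continuity))
    exact ne_of_gt (lt_of_lt_of_le one_pos hx.1)
  have hderiv : ∀ γ ∈ Set.uIcc (1:ℝ) t,
      HasDerivAt (fun γ => t * Real.log γ - γ) (γ⁻¹ * (t - γ)) γ := by
    intro γ hγ
    rw [Set.uIcc_of_le ht] at hγ
    have hγ0 : γ ≠ 0 := ne_of_gt (lt_of_lt_of_le one_pos hγ.1)
    have h1 : HasDerivAt (fun γ => t * Real.log γ - γ) (t * γ⁻¹ - 1) γ :=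
      ((Real.hasDerivAt_log hγ0).const_mul t).sub (hasDerivAt_id γ)
    convert h1 using 1
    field_simp
  rw [intervalIntegral.integral_eq_sub_of_hasDerivAt hderiv hint]
  simp [Real.log_one]

lemma dpAux_ftc_lt {t : ℝ} (ht0 : 0 < t) (ht : t ≤ 1) :
    ∫ γ in Set.Ioc t 1, γ⁻¹ * (γ - t) = t * Real.log t - t + 1 := by
  rw [← intervalIntegral.integral_of_le ht]
  have hint : IntervalIntegrable (fun γ : ℝ => γ⁻¹ * (γ - t)) MeasureTheory.volume t 1 := by
    rw [intervalIntegrable_iff]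
    refine IntegrableOn.mono_set ?_ (Set.uIoc_of_le ht ▸ Set.Ioc_subset_Icc_self)
    refine ContinuousOn.integrableOn_Icc ?_
    refine ContinuousOn.mul (ContinuousOn.inv₀ continuousOn_id fun x hx => ?_)
      (Continuous.continuousOn (by continuity))
    exact ne_of_gt (lt_of_lt_of_le ht0 hx.1)
  have hderiv : ∀ γ ∈ Set.uIcc t (1:ℝ),
      HasDerivAt (fun γ => γ - t * Real.log γ) (γ⁻¹ * (γ - t)) γ := by
    intro γ hγ
    rw [Set.uIcc_of_le ht] at hγ
    have hγ0 : γ ≠ 0 := ne_of_gt (lt_of_lt_of_le ht0 hγ.1)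
    have h1 : HasDerivAt (fun γ => γ - t * Real.log γ) (1 - t * γ⁻¹) γ :=
      (hasDerivAt_id γ).sub ((Real.hasDerivAt_log hγ0).const_mul t)
    convert h1 using 1
    field_simp
  rw [intervalIntegral.integral_eq_sub_of_hasDerivAt hderiv hint]
  simp [Real.log_one]
  ring

lemma dpAux_part_ge (t : ℝ) (ht : 0 ≤ t) :
    (∫⁻ γ in Set.Ici (1:ℝ), (ENNReal.ofReal γ)⁻¹ * dpPsi γ (ENNReal.ofReal t))
      = if 1 ≤ t then ENNReal.ofReal (t * Real.log t - t + 1) else 0 := by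
  rw [setLIntegral_congr ((MeasureTheory.Ioi_ae_eq_Ici (a := (1:ℝ))).symm)]
  by_cases h1t : 1 ≤ t
  · rw [if_pos h1t]
    rw [← Set.Ioc_union_Ioi_eq_Ioi h1t,
      lintegral_union measurableSet_Ioi
        (Set.disjoint_left.mpr fun x hx hx' => absurd hx' (not_lt.mpr hx.2))]
    have hIoit : (∫⁻ γ in Set.Ioi t, (ENNReal.ofReal γ)⁻¹ * dpPsi γ (ENNReal.ofReal t)) = 0 := by
      rw [setLIntegral_congr_fun measurableSet_Ioi
        (fun γ (hγ : t < γ) => ?_), lintegral_zero]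
      have h1γ : 1 ≤ γ := le_of_lt (lt_of_le_of_lt h1t hγ)
      rw [dpPsi, if_pos h1γ, tsub_eq_zero_of_le (ENNReal.ofReal_le_ofReal (le_of_lt hγ)),
        mul_zero]
    rw [hIoit, add_zero]
    have hcongr : (∫⁻ γ in Set.Ioc 1 t, (ENNReal.ofReal γ)⁻¹ * dpPsi γ (ENNReal.ofReal t))
        = ∫⁻ γ in Set.Ioc 1 t, ENNReal.ofReal (γ⁻¹ * (t - γ)) := by
      refine setLIntegral_congr_fun measurableSet_Ioc
        (fun γ hγ => ?_)
      have hγpos : (0:ℝ) < γ := lt_of_lt_of_le one_pos (le_of_lt hγ.1)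
      rw [dpPsi, if_pos (le_of_lt hγ.1), ENNReal.ofReal_mul (inv_nonneg.mpr hγpos.le),
        ENNReal.ofReal_sub t hγpos.le, ENNReal.ofReal_inv_of_pos hγpos]
    rw [hcongr]
    have hint : Integrable (fun γ : ℝ => γ⁻¹ * (t - γ)) (volume.restrict (Set.Ioc 1 t)) := by
      refine IntegrableOn.mono_set ?_ Set.Ioc_subset_Icc_self
      refine ContinuousOn.integrableOn_Icc ?_
      refine ContinuousOn.mul (ContinuousOn.inv₀ continuousOn_id fun x hx => ?_)
        (Continuous.continuousOn (by continuity))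
      exact ne_of_gt (lt_of_lt_of_le one_pos hx.1)
    have hnn : 0 ≤ᵐ[volume.restrict (Set.Ioc 1 t)] fun γ : ℝ => γ⁻¹ * (t - γ) := by
      refine (ae_restrict_iff' measurableSet_Ioc).mpr (Filter.Eventually.of_forall
        (fun γ hγ => ?_))
      have hγpos : (0:ℝ) < γ := lt_of_lt_of_le one_pos (le_of_lt hγ.1)
      exact mul_nonneg (inv_nonneg.mpr hγpos.le) (sub_nonneg.mpr hγ.2)
    rw [← MeasureTheory.ofReal_integral_eq_lintegral_ofReal hint hnn, dpAux_ftc_ge h1t]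
  · rw [if_neg h1t]
    rw [setLIntegral_congr_fun measurableSet_Ioi
      (fun γ (hγ : 1 < γ) => ?_), lintegral_zero]
    rw [dpPsi, if_pos (le_of_lt hγ),
      tsub_eq_zero_of_le (ENNReal.ofReal_le_ofReal (le_of_lt (lt_of_le_of_lt
        (le_of_not_ge h1t) hγ))), mul_zero]

lemma dpAux_part_lt (t : ℝ) (ht : 0 ≤ t) :
    (∫⁻ γ in Set.Ioo (0:ℝ) 1, (ENNReal.ofReal γ)⁻¹ * dpPsi γ (ENNReal.ofReal t))
      = if t < 1 then ENNReal.ofReal (t * Real.log t - t + 1) else 0 := by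
  by_cases ht1 : t < 1
  · rw [if_pos ht1]
    rcases eq_or_lt_of_le ht with ht0 | ht0
    · -- t = 0
      have hconst : (∫⁻ γ in Set.Ioo (0:ℝ) 1, (ENNReal.ofReal γ)⁻¹ * dpPsi γ (ENNReal.ofReal t))
          = ∫⁻ _ in Set.Ioo (0:ℝ) 1, (1:ℝ≥0∞) := by
        refine setLIntegral_congr_fun measurableSet_Ioo
          (fun γ hγ => ?_)
        rw [dpPsi, if_neg (not_le.mpr hγ.2), ← ht0]
        simp only [ENNReal.ofReal_zero, tsub_zero]
        exact ENNReal.inv_mul_cancel (by simpa using hγ.1) ENNReal.ofReal_ne_top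
      rw [hconst, ← ht0]
      simp [Real.volume_Ioo]
    · -- 0 < t < 1
      rw [← Set.Ioc_union_Ioo_eq_Ioo (le_of_lt ht0) ht1,
        lintegral_union measurableSet_Ioo
          (Set.disjoint_left.mpr fun x hx hx' => absurd hx'.1 (not_lt.mpr hx.2))]
      have hIoc0 : (∫⁻ γ in Set.Ioc 0 t, (ENNReal.ofReal γ)⁻¹ * dpPsi γ (ENNReal.ofReal t))
          = 0 := by
        rw [setLIntegral_congr_fun measurableSet_Ioc
          (fun γ hγ => ?_), lintegral_zero]
        rw [dpPsi, if_neg (not_le.mpr (lt_of_le_of_lt hγ.2 ht1)),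
          tsub_eq_zero_of_le (ENNReal.ofReal_le_ofReal hγ.2), mul_zero]
      rw [hIoc0, zero_add]
      have hcongr : (∫⁻ γ in Set.Ioo t 1, (ENNReal.ofReal γ)⁻¹ * dpPsi γ (ENNReal.ofReal t))
          = ∫⁻ γ in Set.Ioo t 1, ENNReal.ofReal (γ⁻¹ * (γ - t)) := by
        refine setLIntegral_congr_fun measurableSet_Ioo
          (fun γ hγ => ?_)
        have hγpos : (0:ℝ) < γ := lt_trans ht0 hγ.1
        rw [dpPsi, if_neg (not_le.mpr hγ.2), ENNReal.ofReal_mul (inv_nonneg.mpr hγpos.le),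
          ENNReal.ofReal_sub γ ht, ENNReal.ofReal_inv_of_pos hγpos]
      rw [hcongr, setLIntegral_congr (MeasureTheory.Ioo_ae_eq_Ioc (a := t) (b := (1:ℝ)))]
      have hint : Integrable (fun γ : ℝ => γ⁻¹ * (γ - t)) (volume.restrict (Set.Ioc t 1)) := by
        refine IntegrableOn.mono_set ?_ Set.Ioc_subset_Icc_self
        refine ContinuousOn.integrableOn_Icc ?_
        refine ContinuousOn.mul (ContinuousOn.inv₀ continuousOn_id fun x hx => ?_)
          (Continuous.continuousOn (by continuity))
        exact ne_of_gt (lt_of_lt_of_le ht0 hx.1)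
      have hnn : 0 ≤ᵐ[volume.restrict (Set.Ioc t 1)] fun γ : ℝ => γ⁻¹ * (γ - t) := by
        refine (ae_restrict_iff' measurableSet_Ioc).mpr (Filter.Eventually.of_forall
          (fun γ hγ => ?_))
        exact mul_nonneg (inv_nonneg.mpr (le_of_lt (lt_trans ht0 hγ.1)))
          (sub_nonneg.mpr (le_of_lt hγ.1))
      rw [← MeasureTheory.ofReal_integral_eq_lintegral_ofReal hint hnn,
        dpAux_ftc_lt ht0 (le_of_lt ht1)]
  · rw [if_neg ht1]
    rw [setLIntegral_congr_fun measurableSet_Ioo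
      (fun γ hγ => ?_), lintegral_zero]
    rw [dpPsi, if_neg (not_le.mpr hγ.2),
      tsub_eq_zero_of_le (ENNReal.ofReal_le_ofReal (le_of_lt (lt_of_lt_of_le hγ.2
        (not_lt.mp ht1)))), mul_zero]

lemma dpAux_pointwise (t : ℝ) (ht : 0 ≤ t) :
    (∫⁻ γ in Set.Ioi (0:ℝ), (ENNReal.ofReal γ)⁻¹ * dpPsi γ (ENNReal.ofReal t))
      = ENNReal.ofReal (t * Real.log t - t + 1) := by
  rw [← Set.Ioo_union_Ici_eq_Ioi (one_pos : (0:ℝ) < 1),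
    lintegral_union measurableSet_Ici
      (Set.disjoint_left.mpr fun x hx hx' => absurd hx.2 (not_lt.mpr hx')),
    dpAux_part_ge t ht, dpAux_part_lt t ht]
  rcases lt_trichotomy t 1 with h | h | h
  · rw [if_pos h, if_neg (not_le.mpr h), add_zero]
  · rw [h]
    norm_num
  · rw [if_neg (not_lt.mpr (le_of_lt h)), if_pos (le_of_lt h), zero_add]

lemma dpAux_rep {X : Type*} [MeasurableSpace X] (P Q : Measure X)
    [IsFiniteMeasure P] [IsFiniteMeasure Q] :
    (∫⁻ x, ENNReal.ofReal ((P.rnDeriv Q x).toReal * Real.log (P.rnDeriv Q x).toReal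
        - (P.rnDeriv Q x).toReal + 1) ∂Q)
      = ∫⁻ γ in Set.Ioi (0:ℝ), (ENNReal.ofReal γ)⁻¹ * ∫⁻ x, dpPsi γ (P.rnDeriv Q x) ∂Q := by
  set g := P.rnDeriv Q with hg
  have hgm : Measurable g := Measure.measurable_rnDeriv P Q
  have hmeas : Measurable fun p : ℝ × X => (ENNReal.ofReal p.1)⁻¹ * dpPsi p.1 (g p.2) := by
    simp only [dpPsi]
    refine Measurable.mul ((ENNReal.measurable_ofReal.comp measurable_fst).inv) ?_
    refine Measurable.ite ?_ ?_ ?_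
    · exact measurableSet_le measurable_const measurable_fst
    · exact (hgm.comp measurable_snd).sub (ENNReal.measurable_ofReal.comp measurable_fst)
    · exact (ENNReal.measurable_ofReal.comp measurable_fst).sub (hgm.comp measurable_snd)
  have hswap : (∫⁻ γ in Set.Ioi (0:ℝ), ∫⁻ x, (ENNReal.ofReal γ)⁻¹ * dpPsi γ (g x) ∂Q)
      = ∫⁻ x, (∫⁻ γ in Set.Ioi (0:ℝ), (ENNReal.ofReal γ)⁻¹ * dpPsi γ (g x)) ∂Q :=
    lintegral_lintegral_swap hmeas.aemeasurable
  have hinner : ∀ γ ∈ Set.Ioi (0:ℝ),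
      (ENNReal.ofReal γ)⁻¹ * (∫⁻ x, dpPsi γ (g x) ∂Q)
        = ∫⁻ x, (ENNReal.ofReal γ)⁻¹ * dpPsi γ (g x) ∂Q := by
    intro γ hγ
    exact (lintegral_const_mul' _ _
      (by simp [ENNReal.ofReal_eq_zero, not_le.mpr (Set.mem_Ioi.mp hγ)] : (ENNReal.ofReal γ)⁻¹ ≠ ⊤)).symm
  rw [setLIntegral_congr_fun measurableSet_Ioi hinner, hswap]
  refine lintegral_congr_ae ?_
  filter_upwards [Measure.rnDeriv_lt_top P Q] with x hx
  have := dpAux_pointwise (g x).toReal ENNReal.toReal_nonneg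
  rw [ENNReal.ofReal_toReal hx.ne] at this
  exact this.symm

lemma dpAux_phi_nonneg {t : ℝ} (ht : 0 ≤ t) : 0 ≤ t * Real.log t - t + 1 := by
  rcases eq_or_lt_of_le ht with h | h
  · simp [← h]
  · have h1 : Real.log t⁻¹ ≤ t⁻¹ - 1 := Real.log_le_sub_one_of_pos (inv_pos.mpr h)
    rw [Real.log_inv] at h1
    have h2 : t * t⁻¹ = 1 := mul_inv_cancel₀ (ne_of_gt h)
    nlinarith

lemma dpAux_gbound {t : ℝ} (ht : 0 ≤ t) :
    |t * Real.log t| ≤ (t * Real.log t - t + 1) + t + Real.exp (-1) := by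
  have hexp : 0 < Real.exp (-1) := Real.exp_pos _
  rcases le_or_gt 1 t with h1 | h1
  · have hlog : 0 ≤ Real.log t := Real.log_nonneg h1
    rw [abs_of_nonneg (mul_nonneg ht hlog)]
    linarith
  · have hlog : Real.log t ≤ 0 := by
      rcases eq_or_lt_of_le ht with h | h
      · simp [← h]
      · exact le_of_lt (Real.log_neg h h1)
    have hG : t * Real.log t ≤ 0 := mul_nonpos_of_nonneg_of_nonpos ht hlog
    rw [abs_of_nonpos hG]
    have hF : 0 ≤ t * Real.log t - t + 1 := dpAux_phi_nonneg ht
    have hkey : -(t * Real.log t) ≤ Real.exp (-1) := by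
      rcases eq_or_lt_of_le ht with h | h
      · rw [← h]
        simpa using hexp.le
      · have hu : (0:ℝ) < t⁻¹ := inv_pos.mpr h
        have hlu : Real.log (t⁻¹ * Real.exp (-1))
            ≤ t⁻¹ * Real.exp (-1) - 1 :=
          Real.log_le_sub_one_of_pos (mul_pos hu hexp)
        rw [Real.log_mul (ne_of_gt hu) (ne_of_gt hexp), Real.log_inv, Real.log_exp] at hlu
        have h2 : t * t⁻¹ = 1 := mul_inv_cancel₀ (ne_of_gt h)
        nlinarith [mul_le_mul_of_nonneg_left hlu h.le, h2]
    linarith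

lemma dpAux_integrable_llr {X : Type*} [MeasurableSpace X] (P Q : Measure X)
    [IsProbabilityMeasure P] [IsProbabilityMeasure Q] (hac : P ≪ Q)
    (hfin : (∫⁻ x, ENNReal.ofReal ((P.rnDeriv Q x).toReal * Real.log (P.rnDeriv Q x).toReal
        - (P.rnDeriv Q x).toReal + 1) ∂Q) ≠ ⊤) :
    Integrable (llr P Q) P := by
  set h : X → ℝ := fun x => (P.rnDeriv Q x).toReal with hhdef
  have hhm : Measurable h := (Measure.measurable_rnDeriv P Q).ennreal_toReal
  set F : X → ℝ := fun x => h x * Real.log (h x) - h x + 1 with hFdef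
  have hFm : Measurable F := ((hhm.mul (Real.measurable_log.comp hhm)).sub hhm).add
    measurable_const
  have hFnn : ∀ x, 0 ≤ F x := fun x => dpAux_phi_nonneg ENNReal.toReal_nonneg
  have hFint : Integrable F Q := by
    refine ⟨hFm.aestronglyMeasurable, ?_⟩
    rw [hasFiniteIntegral_iff_ofReal (Filter.Eventually.of_forall hFnn)]
    exact lt_top_iff_ne_top.mpr hfin
  have hhint : Integrable h Q := Measure.integrable_toReal_rnDeriv
  have hGint : Integrable (fun x => h x * Real.log (h x)) Q := by
    refine Integrable.mono' ((hFint.add hhint).add (integrable_const (Real.exp (-1))))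
      ((hhm.mul (Real.measurable_log.comp hhm)).aestronglyMeasurable) ?_
    refine Filter.Eventually.of_forall fun x => ?_
    have hb := dpAux_gbound (ENNReal.toReal_nonneg : 0 ≤ (P.rnDeriv Q x).toReal)
    simpa [hFdef, hhdef, abs_mul] using hb
  have := (integrable_rnDeriv_smul_iff hac (f := llr P Q)).mp ?_
  · exact this
  · have : (fun x => (P.rnDeriv Q x).toReal • llr P Q x) = fun x => h x * Real.log (h x) := by
      funext x
      rw [smul_eq_mul, llr]
    rw [this]
    exact hGint

lemma dpAux_kl_eq {X : Type*} [MeasurableSpace X] (P Q : Measure X)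
    [IsProbabilityMeasure P] [IsProbabilityMeasure Q] (hac : P ≪ Q)
    (hint : Integrable (llr P Q) P) :
    ENNReal.ofReal (∫ x, llr P Q x ∂P)
      = ∫⁻ x, ENNReal.ofReal ((P.rnDeriv Q x).toReal * Real.log (P.rnDeriv Q x).toReal
        - (P.rnDeriv Q x).toReal + 1) ∂Q := by
  set h : X → ℝ := fun x => (P.rnDeriv Q x).toReal with hhdef
  have hhm : Measurable h := (Measure.measurable_rnDeriv P Q).ennreal_toReal
  have hsmul : (fun x => (P.rnDeriv Q x).toReal • llr P Q x)
      = fun x => h x * Real.log (h x) := by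
    funext x
    rw [smul_eq_mul, llr]
  have hGint : Integrable (fun x => h x * Real.log (h x)) Q := by
    rw [← hsmul]
    exact (integrable_rnDeriv_smul_iff hac).mpr hint
  have hhint : Integrable h Q := Measure.integrable_toReal_rnDeriv
  have hintval : ∫ x, h x ∂Q = 1 := by
    rw [hhdef]
    rw [Measure.integral_toReal_rnDeriv hac]
    simp
  have hllr : ∫ x, h x * Real.log (h x) ∂Q = ∫ x, llr P Q x ∂P := by
    rw [← hsmul, integral_rnDeriv_smul hac]
  have hkey : ∫ x, (h x * Real.log (h x) - h x + 1) ∂Q = ∫ x, llr P Q x ∂P := by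
    have h1 : ∫ x, (h x * Real.log (h x) - h x + 1) ∂Q
        = (∫ x, (h x * Real.log (h x) - h x) ∂Q) + ∫ _, (1:ℝ) ∂Q :=
      integral_add (hGint.sub hhint) (integrable_const 1)
    have h2 : ∫ x, (h x * Real.log (h x) - h x) ∂Q
        = (∫ x, h x * Real.log (h x) ∂Q) - ∫ x, h x ∂Q := integral_sub hGint hhint
    rw [h1, h2, hintval, hllr, integral_const]
    simp
  rw [← hkey]
  refine MeasureTheory.ofReal_integral_eq_lintegral_ofReal
    ((hGint.sub hhint).add (integrable_const 1))
    (Filter.Eventually.of_forall fun x => dpAux_phi_nonneg ENNReal.toReal_nonneg)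

/-!
Contraction of KL divergence and total variation through an `(ε,δ)`-differentially
private channel: if `R(h)(S) ≤ e^ε R(h')(S) + δ` for all inputs `h, h'` and measurable
`S`, and `ν = μ ∘ R`, `ν' = μ' ∘ R` are the output distributions, then
`KL(ν, ν') ≤ (1 − e^{−ε}(1−δ))·KL(μ, μ')` and `d_TV(ν, ν') ≤ (1 − e^{−ε}(1−δ))·d_TV(μ, μ')`.
-/

theorem dp_channel_contraction
    {H Q : Type*} [MeasurableSpace H] [MeasurableSpace Q]
    (R : ProbabilityTheory.Kernel H Q) [ProbabilityTheory.IsMarkovKernel R]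
    (ε δ : ℝ) (hε : 0 ≤ ε) (hδ0 : 0 ≤ δ) (hδ1 : δ ≤ 1)
    (hDP : ∀ h h' : H, ∀ S : Set Q, MeasurableSet S →
      R h S ≤ ENNReal.ofReal (Real.exp ε) * R h' S + ENNReal.ofReal δ)
    (μ μ' : Measure H) [IsProbabilityMeasure μ] [IsProbabilityMeasure μ'] :
    klDiv' (μ.bind fun h => R h) (μ'.bind fun h => R h)
        ≤ ENNReal.ofReal (1 - Real.exp (-ε) * (1 - δ)) * klDiv' μ μ' ∧
      tvDist (μ.bind fun h => R h) (μ'.bind fun h => R h)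
        ≤ (1 - Real.exp (-ε) * (1 - δ)) * tvDist μ μ' := by
  set c := 1 - Real.exp (-ε) * (1 - δ) with hcdef
  have hc0 : 0 ≤ c := dpAux_c_nonneg hε hδ0 hδ1
  haveI hne : Nonempty H := by
    by_contra h
    rw [not_nonempty_iff] at h
    have h0 : μ Set.univ = 0 := by
      rw [Set.univ_eq_empty_iff.mpr h]
      exact measure_empty
    rw [measure_univ] at h0
    exact one_ne_zero h0
  have hosc : ∀ h h' : H, ∀ S : Set Q, MeasurableSet S →
      R h S ≤ R h' S + ENNReal.ofReal c :=
    fun h h' S hS => dpAux_osc R ε δ hε hδ0 hδ1 hDP h h' S hS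
  set ν := μ.bind fun h => R h with hνdef
  set ν' := μ'.bind fun h => R h with hν'def
  haveI : IsProbabilityMeasure ν := dpAux_bind_prob R μ
  haveI : IsProbabilityMeasure ν' := dpAux_bind_prob R μ'
  constructor
  · -- KL part
    by_cases hczero : c = 0
    · -- degenerate case: the kernel is constant, ν = ν'
      have hRconst : ∀ h h' : H, ∀ S : Set Q, MeasurableSet S → R h S = R h' S := by
        intro h h' S hS
        have h1 := hosc h h' S hS
        have h2 := hosc h' h S hS
        rw [hczero, ENNReal.ofReal_zero, add_zero] at h1 h2
        exact le_antisymm h1 h2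
      have hνν' : ν = ν' := by
        have h0 : H := Classical.arbitrary H
        refine Measure.ext fun S hS => ?_
        rw [hνdef, hν'def, Measure.bind_apply hS R.measurable.aemeasurable,
          Measure.bind_apply hS R.measurable.aemeasurable]
        calc ∫⁻ h, R h S ∂μ = ∫⁻ _, R h0 S ∂μ :=
              lintegral_congr fun h => hRconst h h0 S hS
          _ = R h0 S := by simp
          _ = ∫⁻ _, R h0 S ∂μ' := by simp
          _ = ∫⁻ h, R h S ∂μ' := lintegral_congr fun h => (hRconst h h0 S hS).symm
      rw [hνν']
      have hself : klDiv' ν' ν' = 0 := by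
        have hll : llr ν' ν' =ᵐ[ν'] 0 := by
          filter_upwards [Measure.rnDeriv_self ν'] with x hx
          simp [llr, hx]
        rw [klDiv', if_pos ⟨Measure.AbsolutelyContinuous.rfl,
          (integrable_congr hll).mpr (integrable_zero _ _ _)⟩, integral_congr_ae hll]
        simp
      rw [hself]
      exact zero_le
    · have hcpos : 0 < c := lt_of_le_of_ne hc0 (Ne.symm hczero)
      have hcne : ENNReal.ofReal c ≠ 0 := by
        simp only [ne_eq, ENNReal.ofReal_eq_zero, not_le]
        exact hcpos
      by_cases hkl : μ ≪ μ' ∧ Integrable (llr μ μ') μ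
      · obtain ⟨hac, hint⟩ := hkl
        have hacν : ν ≪ ν' := dpAux_bind_ac R μ μ' hac
        have hcontr : (∫⁻ x, ENNReal.ofReal ((ν.rnDeriv ν' x).toReal
              * Real.log (ν.rnDeriv ν' x).toReal - (ν.rnDeriv ν' x).toReal + 1) ∂ν')
            ≤ ENNReal.ofReal c * ∫⁻ x, ENNReal.ofReal ((μ.rnDeriv μ' x).toReal
              * Real.log (μ.rnDeriv μ' x).toReal - (μ.rnDeriv μ' x).toReal + 1) ∂μ' := by
          rw [dpAux_rep ν ν', dpAux_rep μ μ']
          calc (∫⁻ γ in Set.Ioi (0:ℝ),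
                (ENNReal.ofReal γ)⁻¹ * ∫⁻ x, dpPsi γ (ν.rnDeriv ν' x) ∂ν')
              ≤ ∫⁻ γ in Set.Ioi (0:ℝ), ENNReal.ofReal c
                  * ((ENNReal.ofReal γ)⁻¹ * ∫⁻ x, dpPsi γ (μ.rnDeriv μ' x) ∂μ') := by
                refine setLIntegral_mono' measurableSet_Ioi fun γ hγ => ?_
                calc (ENNReal.ofReal γ)⁻¹ * ∫⁻ x, dpPsi γ (ν.rnDeriv ν' x) ∂ν'
                    ≤ (ENNReal.ofReal γ)⁻¹ * (ENNReal.ofReal c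
                        * ∫⁻ x, dpPsi γ (μ.rnDeriv μ' x) ∂μ') :=
                      mul_le_mul_right (dpAux_contraction R c hc0 hosc μ μ' hac γ hγ) _
                  _ = ENNReal.ofReal c * ((ENNReal.ofReal γ)⁻¹
                        * ∫⁻ x, dpPsi γ (μ.rnDeriv μ' x) ∂μ') := by ring
            _ = ENNReal.ofReal c * ∫⁻ γ in Set.Ioi (0:ℝ),
                  (ENNReal.ofReal γ)⁻¹ * ∫⁻ x, dpPsi γ (μ.rnDeriv μ' x) ∂μ' :=
              lintegral_const_mul' _ _ ENNReal.ofReal_ne_top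
        have hfinμ : (∫⁻ x, ENNReal.ofReal ((μ.rnDeriv μ' x).toReal
              * Real.log (μ.rnDeriv μ' x).toReal - (μ.rnDeriv μ' x).toReal + 1) ∂μ') ≠ ⊤ := by
          rw [← dpAux_kl_eq μ μ' hac hint]
          exact ENNReal.ofReal_ne_top
        have hfinν : (∫⁻ x, ENNReal.ofReal ((ν.rnDeriv ν' x).toReal
              * Real.log (ν.rnDeriv ν' x).toReal - (ν.rnDeriv ν' x).toReal + 1) ∂ν') ≠ ⊤ :=
          ne_top_of_le_ne_top (ENNReal.mul_ne_top ENNReal.ofReal_ne_top hfinμ) hcontr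
        have hintν : Integrable (llr ν ν') ν := dpAux_integrable_llr ν ν' hacν hfinν
        rw [klDiv', if_pos ⟨hacν, hintν⟩, klDiv', if_pos ⟨hac, hint⟩,
          dpAux_kl_eq ν ν' hacν hintν, dpAux_kl_eq μ μ' hac hint]
        exact hcontr
      · have htop : klDiv' μ μ' = ⊤ := by rw [klDiv', if_neg hkl]
        rw [htop, ENNReal.mul_top hcne]
        exact le_top
  · exact dpAux_tv R c hc0 hosc μ μ'
end
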